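/- arXiv:2507.13214 — 7 statements merged into one kernel-verified Lean document; each statement's English description precedes it below -/
import Mathlib

section
/- Let Q be a finite lattice and X an order-convex subset of Q with a minimum element. Suppose that for all γ, γ' in X such that γ∧γ' is covered by both γ and γ', the join γ∨γ' belongs to X. Then X has a maximum element. -/
/-- Let `Q` be a finite lattice and `X` an order-convex subset of `Q`
with a minimum element.  If for all `γ, γ' ∈ X` such that `γ ⊓ γ'` is covered by both
`γ` and `γ'` we have `γ ⊔ γ' ∈ X`, then `X` has a maximum element. -/
theorem orderConvex_max {Q : Type*} [Lattice Q] [Fintype Q] (X : Set Q)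
    (hconv : ∀ a ∈ X, ∀ b ∈ X, a ≤ b → Set.Icc a b ⊆ X)
    (hmin : ∃ m ∈ X, ∀ x ∈ X, m ≤ x)
    (hjoin : ∀ γ ∈ X, ∀ γ' ∈ X, γ ⊓ γ' ⋖ γ → γ ⊓ γ' ⋖ γ' → γ ⊔ γ' ∈ X) :
    ∃ M ∈ X, ∀ x ∈ X, x ≤ M := by
  classical
  obtain ⟨m, hmX, hm⟩ := hmin
  -- X is closed under joins
  have key : ∀ n : ℕ, ∀ a ∈ X, ∀ b ∈ X,
      (Set.Icc (a ⊓ b) (a ⊔ b)).ncard ≤ n → a ⊔ b ∈ X := by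
    intro n
    induction n with
    | zero =>
      intro a ha b hb h
      exfalso
      have hpos : 0 < (Set.Icc (a ⊓ b) (a ⊔ b)).ncard :=
        (Set.ncard_pos (Set.toFinite _)).mpr ⟨a ⊓ b, le_refl _, inf_le_left.trans le_sup_left⟩
      omega
    | succ n ih =>
      intro a ha b hb hcard
      by_cases hab : a ≤ b
      · rw [sup_eq_right.mpr hab]; exact hb
      by_cases hba : b ≤ a
      · rw [sup_eq_left.mpr hba]; exact ha
      have hca : a ⊓ b < a := inf_lt_left.mpr hab
      have hcb : a ⊓ b < b := inf_lt_right.mpr hba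
      have hcX : a ⊓ b ∈ X :=
        hconv m hmX a ha (hm a ha) ⟨le_inf (hm a ha) (hm b hb), inf_le_left⟩
      obtain ⟨a', hca', ha'a⟩ := exists_covBy_le_of_lt hca
      obtain ⟨b', hcb', hb'b⟩ := exists_covBy_le_of_lt hcb
      have ha'X : a' ∈ X := hconv _ hcX a ha inf_le_left ⟨hca'.le, ha'a⟩
      have hb'X : b' ∈ X := hconv _ hcX b hb inf_le_right ⟨hcb'.le, hb'b⟩
      have hmeet : a' ⊓ b' = a ⊓ b :=
        le_antisymm (inf_le_inf ha'a hb'b) (le_inf hca'.le hcb'.le)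
      have hdX : a' ⊔ b' ∈ X := hjoin a' ha'X b' hb'X (hmeet ▸ hca') (hmeet ▸ hcb')
      have hdle : a' ⊔ b' ≤ a ⊔ b :=
        sup_le (ha'a.trans le_sup_left) (hb'b.trans le_sup_right)
      have hsub : ∀ x y : Q, a ⊓ b < x ⊓ y → x ⊔ y ≤ a ⊔ b →
          (Set.Icc (x ⊓ y) (x ⊔ y)).ncard ≤ n := by
        intro x y h1 h2
        have hss : Set.Icc (x ⊓ y) (x ⊔ y) ⊂ Set.Icc (a ⊓ b) (a ⊔ b) := by
          constructor
          · intro z hz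
            exact ⟨h1.le.trans hz.1, hz.2.trans h2⟩
          · intro hle
            have := hle ⟨le_refl (a ⊓ b), inf_le_left.trans le_sup_left⟩
            exact absurd this.1 (not_le_of_gt h1)
        have := Set.ncard_lt_ncard hss (Set.toFinite _)
        omega
      have h1 : a ⊔ (a' ⊔ b') ∈ X := by
        refine ih a ha _ hdX (hsub _ _ ?_ ?_)
        · exact lt_of_lt_of_le hca'.lt (le_inf ha'a le_sup_left)
        · exact sup_le le_sup_left hdle
      have h2 : b ⊔ (a' ⊔ b') ∈ X := by
        refine ih b hb _ hdX (hsub _ _ ?_ ?_)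
        · exact lt_of_lt_of_le hcb'.lt (le_inf hb'b le_sup_right)
        · exact sup_le le_sup_right hdle
      have heq : (a ⊔ (a' ⊔ b')) ⊔ (b ⊔ (a' ⊔ b')) = a ⊔ b := by
        apply le_antisymm
        · exact sup_le (sup_le le_sup_left hdle) (sup_le le_sup_right hdle)
        · exact sup_le (le_sup_left.trans le_sup_left) (le_sup_left.trans le_sup_right)
      have h3 := ih _ h1 _ h2 (hsub _ _ ?_ ?_)
      · rwa [heq] at h3
      · calc a ⊓ b < a' := hca'.lt
          _ ≤ (a ⊔ (a' ⊔ b')) ⊓ (b ⊔ (a' ⊔ b')) :=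
            le_inf (le_sup_left.trans le_sup_right) (le_sup_left.trans le_sup_right)
      · rw [heq]
  have hjc : ∀ a ∈ X, ∀ b ∈ X, a ⊔ b ∈ X := fun a ha b hb =>
    key _ a ha b hb le_rfl
  have hne : X.toFinset.Nonempty := ⟨m, Set.mem_toFinset.mpr hmX⟩
  refine ⟨X.toFinset.sup' hne id, ?_, ?_⟩
  · exact Finset.sup'_induction hne id
      (fun x hx y hy => hjc x hx y hy)
      (fun b hb => Set.mem_toFinset.mp hb)
  · intro x hx
    exact Finset.le_sup' id (Set.mem_toFinset.mpr hx)
end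

section
/- Let Q be a finite poset with a minimum element and a maximum element. If for all distinct γ₀, γ₁, γ₂ in Q with γ₀ ⋖ γ₁ and γ₀ ⋖ γ₂, the elements γ₁ and γ₂ have a least upper bound in Q, then Q is a lattice. -/
/-- Björner–Edelman–Ziegler: a finite poset with a minimum and a maximum
element in which any two distinct elements covering a common element have a least upper
bound is a lattice. -/
theorem lattice_of_covers_have_lub {Q : Type*} [PartialOrder Q] [Fintype Q]
    (hmin : ∃ m : Q, ∀ x, m ≤ x) (hmax : ∃ M : Q, ∀ x, x ≤ M)
    (h : ∀ γ₀ γ₁ γ₂ : Q, γ₀ ⋖ γ₁ → γ₀ ⋖ γ₂ → γ₁ ≠ γ₂ → ∃ s, IsLUB {γ₁, γ₂} s) :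
    ∀ a b : Q, (∃ s, IsLUB {a, b} s) ∧ ∃ m, IsGLB {a, b} m := by
  classical
  obtain ⟨m, hm⟩ := hmin
  obtain ⟨M, hM⟩ := hmax
  -- key: for every c and x, y ≥ c, the pair {x, y} has a LUB
  have key : ∀ c x y : Q, c ≤ x → c ≤ y → ∃ s, IsLUB {x, y} s := by
    intro c
    induction c using WellFoundedGT.induction with
    | _ c IH =>
      intro x y hcx hcy
      rcases eq_or_lt_of_le hcx with rfl | hcx'
      · exact ⟨y, ⟨by rintro z (rfl | rfl); exacts [hcy, le_rfl],
          fun z hz => hz (by simp)⟩⟩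
      rcases eq_or_lt_of_le hcy with rfl | hcy'
      · exact ⟨x, ⟨by rintro z (rfl | rfl); exacts [le_rfl, hcx],
          fun z hz => hz (by simp)⟩⟩
      obtain ⟨γ₁, hγ₁, hγ₁x⟩ := exists_covBy_le_of_lt hcx'
      obtain ⟨γ₂, hγ₂, hγ₂y⟩ := exists_covBy_le_of_lt hcy'
      rcases eq_or_ne γ₁ γ₂ with rfl | hne
      · exact IH γ₁ hγ₁.lt x y hγ₁x hγ₂y
      · obtain ⟨s, hs⟩ := h c γ₁ γ₂ hγ₁ hγ₂ hne
        have hs1 : γ₁ ≤ s := hs.1 (by simp)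
        have hs2 : γ₂ ≤ s := hs.1 (by simp)
        obtain ⟨t, ht⟩ := IH γ₁ hγ₁.lt x s hγ₁x hs1
        have htx : x ≤ t := ht.1 (by simp)
        have hts : s ≤ t := ht.1 (by simp)
        obtain ⟨u, hu⟩ := IH γ₂ hγ₂.lt t y (hs2.trans hts) hγ₂y
        have hut : t ≤ u := hu.1 (by simp)
        have huy : y ≤ u := hu.1 (by simp)
        refine ⟨u, ⟨?_, ?_⟩⟩
        · rintro z (rfl | rfl)
          · exact htx.trans hut
          · exact huy
        · intro z hz
          have hzx : x ≤ z := hz (by simp)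
          have hzy : y ≤ z := hz (by simp)
          have hzs : s ≤ z := hs.2 (by
            rintro w (rfl | rfl)
            · exact hγ₁x.trans hzx
            · exact hγ₂y.trans hzy)
          have hzt : t ≤ z := ht.2 (by rintro w (rfl | rfl) <;> assumption)
          exact hu.2 (by rintro w (rfl | rfl) <;> assumption)
  have lub : ∀ x y : Q, ∃ s, IsLUB {x, y} s := fun x y => key m x y (hm x) (hm y)
  intro a b
  refine ⟨lub a b, ?_⟩
  -- GLB: LUB of the (finite, nonempty) set of lower bounds
  have finlub : ∀ s : Finset Q, s.Nonempty → ∃ u, IsLUB (↑s : Set Q) u := by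
    intro s hs
    induction hs using Finset.Nonempty.cons_induction with
    | singleton a => exact ⟨a, by simp⟩
    | cons a s ha hs IH =>
      obtain ⟨u, hu⟩ := IH
      obtain ⟨v, hv⟩ := lub a u
      refine ⟨v, ⟨?_, ?_⟩⟩
      · intro z hz
        simp only [Finset.coe_cons, Set.mem_insert_iff, Finset.mem_coe] at hz
        rcases hz with rfl | hz
        · exact hv.1 (by simp)
        · exact (hu.1 hz).trans (hv.1 (by simp))
      · intro z hz
        have hza : a ≤ z := hz (by simp)
        have hzu : u ≤ z := hu.2 fun w hw => hz (by simp [hw])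
        exact hv.2 (by rintro w (rfl | rfl) <;> assumption)
  set L : Finset Q := Finset.univ.filter (fun z => z ≤ a ∧ z ≤ b) with hL
  have hLne : L.Nonempty := ⟨m, by simp [hL, hm a, hm b]⟩
  obtain ⟨g, hg⟩ := finlub L hLne
  have hga : g ≤ a := hg.2 (fun z hz => by simp [hL] at hz; exact hz.1)
  have hgb : g ≤ b := hg.2 (fun z hz => by simp [hL] at hz; exact hz.2)
  refine ⟨g, ⟨?_, ?_⟩⟩
  · rintro z (rfl | rfl) <;> assumption
  · intro z hz
    exact hg.1 (by simp [hL, hz (by simp : a ∈ ({a,b}:Set Q)), hz (by simp : b ∈ ({a,b}:Set Q))])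
end

section
/- A tableau τ : Δ_{n-1} → ℤ_{≥0} is balanced (every Λ-shape is balanced) if and only if for every box (i,j) ∈ Δ_{n-1}, the hook of (i,j) is balanced in τ, i.e., τ(i,j) is the median of the multiset of entries of τ on hook(i,j). -/
open Classical

noncomputable section

/-- 1-based value of a permutation of `Fin n` at a 1-based position `j`. -/
def permVal {n : ℕ} (w : Equiv.Perm (Fin n)) (j : ℕ) : ℕ :=
  if h : 1 ≤ j ∧ j ≤ n then (w ⟨j - 1, by omega⟩ : ℕ) + 1 else 0

/-- `(i,j)` is an inversion of `w`: `1 ≤ i < j ≤ n` and the (1-based) position of the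
value `j` in the one-line notation of `w` precedes that of `i`. -/
def IsInv {n : ℕ} (w : Equiv.Perm (Fin n)) (i j : ℕ) : Prop :=
  1 ≤ i ∧ i < j ∧ j ≤ n ∧ permVal w.symm j < permVal w.symm i

/-- Lehmer form entry at box `(i,j)`: the number of `k ∈ [1, T(i,j)-1]` that do not
appear below box `(i,j)` in column `j`. -/
def lehmer (T : ℕ → ℕ → ℕ) (i j : ℕ) : ℕ :=
  ((Finset.Ico 1 (T i j)).filter fun k => ∀ i', 1 ≤ i' → i' < i → T i' j ≠ k).card

/-- Incrementing box `(i,j)` of `T` yields `T'`:  with `a = T(i,j)` and `b` the smallest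
integer greater than `a` not appearing below `(i,j)` in column `j`, either a pure
increment (if `b` is absent from column `j`) or a trade increment (swap `a` and `b`). -/
def IncrementAt (T T' : ℕ → ℕ → ℕ) (i j : ℕ) : Prop :=
  ∃ b, T i j < b ∧
    (∀ k, T i j < k → k < b → ∃ i', 1 ≤ i' ∧ i' < i ∧ T i' j = k) ∧
    (∀ i', 1 ≤ i' → i' < i → T i' j ≠ b) ∧
    (((∀ i', 1 ≤ i' → T i' j ≠ b) ∧
        T' = fun a c => if a = i ∧ c = j then b else T a c) ∨
      (∃ i'', i < i'' ∧ T i'' j = b ∧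
        T' = fun a c =>
          if a = i ∧ c = j then b else if a = i'' ∧ c = j then T i j else T a c))

/-- `IncBy M T T'`: `T'` is obtained from `T` by incrementing each box of the
multiset `M` (with multiplicity). -/
inductive IncBy : Multiset (ℕ × ℕ) → (ℕ → ℕ → ℕ) → (ℕ → ℕ → ℕ) → Prop
  | nil (T : ℕ → ℕ → ℕ) : IncBy 0 T T
  | cons {M : Multiset (ℕ × ℕ)} {T T' T'' : ℕ → ℕ → ℕ} {i j : ℕ} :
      IncrementAt T T' i j → IncBy M T' T'' → IncBy ((i, j) ::ₘ M) T T''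

/-- Column-injective tableau for `w`: a box has a nonzero entry iff it is an inversion
of `w`, and the nonzero entries in each column are distinct. -/
def ColInj {n : ℕ} (w : Equiv.Perm (Fin n)) (T : ℕ → ℕ → ℕ) : Prop :=
  (∀ i j, T i j ≠ 0 ↔ IsInv w i j) ∧
  ∀ i i' j, 1 ≤ i → i < i' → i' < j → T i j ≠ 0 → T i' j ≠ 0 → T i j ≠ T i' j

/-- The Λ-shape `Λ(i,j,k)` is balanced in `T`. -/
def LBal (T : ℕ → ℕ → ℕ) (i j k : ℕ) : Prop :=
  min (T i j) (T j k) ≤ T i k ∧ T i k ≤ max (T i j) (T j k)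

/-- Every Λ-shape of `Δ_{n-1}` is balanced in `T`. -/
def BalancedTab (n : ℕ) (T : ℕ → ℕ → ℕ) : Prop :=
  ∀ i j k, 1 ≤ i → i < j → j < k → k ≤ n → LBal T i j k

/-- Inversions tableau for `w`: balanced column-injective tableau whose entries in
row `i` are at most `i`. -/
def InvTab {n : ℕ} (w : Equiv.Perm (Fin n)) (T : ℕ → ℕ → ℕ) : Prop :=
  ColInj w T ∧ BalancedTab n T ∧ ∀ i j, T i j ≤ i

/-- The multiset of entries of `T` on `hook(i,k)`. -/
def hookEntries (T : ℕ → ℕ → ℕ) (i k : ℕ) : Multiset ℕ :=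
  (T i k ::ₘ (Finset.Ioo i k).val.map fun r => T r k) +
    (Finset.Ioo i k).val.map fun c => T i c

/-- The median ((k-i)-th smallest of the `2(k-i)-1` entries) of the hook of `(i,k)`. -/
def hookMedian (T : ℕ → ℕ → ℕ) (i k : ℕ) : ℕ :=
  ((hookEntries T i k).sort (· ≤ ·)).getD (k - i - 1) 0


lemma sorted_getD_eq_of_counts {x : ℕ} : ∀ {l : List ℕ}, l.Pairwise (· ≤ ·) → ∀ {p : ℕ},
    l.countP (fun a => decide (a < x)) ≤ p →
    p < l.countP (fun a => decide (a ≤ x)) →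
    l.getD p 0 = x := by
  intro l
  induction l with
  | nil => intro _ p _ h2; simp at h2
  | cons a t ih =>
    intro hs p h1 h2
    have hst := hs.of_cons
    have hall : ∀ b ∈ t, a ≤ b := (List.pairwise_cons.mp hs).1
    rw [List.countP_cons] at h1 h2
    by_cases hax : a < x
    · simp [hax, le_of_lt hax] at h1 h2
      obtain ⟨p', rfl⟩ : ∃ p', p = p' + 1 := ⟨p - 1, by omega⟩
      simpa using ih hst (by omega) (by omega)
    · push_neg at hax
      have hax2 : a ≤ x := by
        by_contra hc
        push_neg at hc
        have ht0' : t.countP (fun a => decide (a ≤ x)) = 0 := by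
          rw [List.countP_eq_zero]; intro b hb
          simpa using not_le.mpr (lt_of_lt_of_le hc (hall b hb))
        rw [ht0'] at h2
        simp [not_le.mpr hc] at h2
      have haxe : a = x := le_antisymm hax2 hax
      have ht0 : t.countP (fun a => decide (a < x)) = 0 := by
        rw [List.countP_eq_zero]; intro b hb
        simpa using not_lt.mpr (le_trans hax (hall b hb))
      match p with
      | 0 => simpa using haxe
      | p' + 1 =>
        simp only [List.getD_cons_succ]
        exact ih hst (by omega) (by simp [hax2] at h2; omega)

lemma counts_of_sorted_getD {x : ℕ} : ∀ {l : List ℕ}, l.Pairwise (· ≤ ·) → ∀ {p : ℕ},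
    p < l.length → l.getD p 0 = x →
    l.countP (fun a => decide (a < x)) ≤ p ∧ p < l.countP (fun a => decide (a ≤ x)) := by
  intro l
  induction l with
  | nil => intro _ p h _; simp at h
  | cons a t ih =>
    intro hs p hp hg
    have hst := hs.of_cons
    have hall : ∀ b ∈ t, a ≤ b := (List.pairwise_cons.mp hs).1
    match p with
    | 0 =>
      simp only [List.getD_cons_zero] at hg
      subst hg
      constructor
      · rw [List.countP_cons]
        have ht0 : t.countP (fun b => decide (b < a)) = 0 := by
          rw [List.countP_eq_zero]; intro b hb
          simpa using not_lt.mpr (hall b hb)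
        simp [ht0]
      · rw [List.countP_cons]; simp
    | p' + 1 =>
      simp only [List.getD_cons_succ] at hg
      simp only [List.length_cons] at hp
      have hp' : p' < t.length := by omega
      obtain ⟨c1, c2⟩ := ih hst hp' hg
      have hax : a ≤ x := by
        have : t.getD p' 0 ∈ t := by
          rw [List.getD_eq_getElem t 0 hp']
          exact List.getElem_mem hp'
        rw [hg] at this
        exact hall x this
      rw [List.countP_cons, List.countP_cons]
      constructor
      · have : (if decide (a < x) = true then 1 else 0) ≤ 1 := by split <;> omega
        omega
      · simp [hax]; omega

lemma countP_hookEntries (T : ℕ → ℕ → ℕ) (i k : ℕ) (p : ℕ → Prop) [DecidablePred p] :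
    (hookEntries T i k).countP p =
      (if p (T i k) then 1 else 0)
      + ((Finset.Ioo i k).filter (fun r => p (T r k))).card
      + ((Finset.Ioo i k).filter (fun c => p (T i c))).card := by
  simp only [hookEntries, Multiset.countP_add, Multiset.countP_cons, Multiset.countP_map]
  have e : ∀ f : ℕ → ℕ, Multiset.card (Multiset.filter (fun a => p (f a)) (Finset.Ioo i k).val)
      = ((Finset.Ioo i k).filter (fun a => p (f a))).card := by
    intro f; rfl
  rw [e, e]
  omega

lemma card_hookEntries (T : ℕ → ℕ → ℕ) {i k : ℕ} (hik : i < k) :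
    Multiset.card (hookEntries T i k) = 2 * (k - i) - 1 := by
  simp [hookEntries, Nat.card_Ioo]
  omega

lemma hookMedian_eq_iff (T : ℕ → ℕ → ℕ) {i k : ℕ} (hik : i < k) :
    T i k = hookMedian T i k ↔
      (k - i) ≤ (hookEntries T i k).countP (fun a => a ≤ T i k) ∧
      (hookEntries T i k).countP (fun a => a < T i k) ≤ k - i - 1 := by
  have hsorted : ((hookEntries T i k).sort (· ≤ ·)).Pairwise (· ≤ ·) :=
    Multiset.pairwise_sort _ _
  have hlen : ((hookEntries T i k).sort (· ≤ ·)).length = 2 * (k - i) - 1 := by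
    rw [Multiset.length_sort, card_hookEntries T hik]
  have hc1 : ((hookEntries T i k).sort (· ≤ ·)).countP (fun a => decide (a ≤ T i k))
      = (hookEntries T i k).countP (fun a => a ≤ T i k) := by
    rw [← Multiset.coe_countP, Multiset.sort_eq]
  have hc2 : ((hookEntries T i k).sort (· ≤ ·)).countP (fun a => decide (a < T i k))
      = (hookEntries T i k).countP (fun a => a < T i k) := by
    rw [← Multiset.coe_countP, Multiset.sort_eq]
  constructor
  · intro h
    have := counts_of_sorted_getD hsorted (p := k - i - 1) (by omega) h.symm
    rw [hc1, hc2] at this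
    omega
  · intro ⟨h1, h2⟩
    exact (sorted_getD_eq_of_counts hsorted (p := k - i - 1)
      (by rw [hc2]; omega) (by rw [hc1]; omega)).symm

/-- A tableau on `Δ_{n-1}` is balanced iff every hook is balanced,
i.e. each entry `T(i,k)` is the median of the entries of `T` on `hook(i,k)`. -/
theorem balanced_iff_hooks_balanced (n : ℕ) (T : ℕ → ℕ → ℕ) :
    BalancedTab n T ↔ ∀ i k, 1 ≤ i → i < k → k ≤ n → T i k = hookMedian T i k := by
  constructor
  · intro hb i k hi hik hkn
    apply (hookMedian_eq_iff T hik).mpr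
    have hIoo : (Finset.Ioo i k).card = k - i - 1 := Nat.card_Ioo i k
    constructor
    · rw [countP_hookEntries, if_pos (le_refl _)]
      set A := (Finset.Ioo i k).filter (fun r => T r k ≤ T i k) with hA
      set B := (Finset.Ioo i k).filter (fun c => T i c ≤ T i k) with hB
      have hsub : Finset.Ioo i k ⊆ A ∪ B := by
        intro j hj
        have hj' := Finset.mem_Ioo.mp hj
        have hbal := (hb i j k hi hj'.1 hj'.2 hkn).1
        rw [min_le_iff] at hbal
        rw [Finset.mem_union, hA, hB]
        simp only [Finset.mem_filter]
        tauto
      have h1 := Finset.card_le_card hsub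
      have h2 := Finset.card_union_le A B
      omega
    · rw [countP_hookEntries, if_neg (lt_irrefl _)]
      set A := (Finset.Ioo i k).filter (fun r => T r k < T i k) with hA
      set B := (Finset.Ioo i k).filter (fun c => T i c < T i k) with hB
      have hdisj : A ∩ B = ∅ := by
        rw [Finset.eq_empty_iff_forall_notMem]
        intro j hj
        rw [Finset.mem_inter, hA, hB] at hj
        simp only [Finset.mem_filter] at hj
        obtain ⟨⟨hjm, h1⟩, _, h2⟩ := hj
        have hj' := Finset.mem_Ioo.mp hjm
        have hbal := (hb i j k hi hj'.1 hj'.2 hkn).2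
        rw [le_max_iff] at hbal
        omega
      have hui := Finset.card_union_add_card_inter A B
      rw [hdisj] at hui
      have hAc : (A ∪ B).card ≤ k - i - 1 := by
        rw [← hIoo]
        exact Finset.card_le_card (Finset.union_subset (Finset.filter_subset _ _)
          (Finset.filter_subset _ _))
      simp at hui
      omega
  · intro hmed
    have key : ∀ m i j k, k - i ≤ m → 1 ≤ i → i < j → j < k → k ≤ n → LBal T i j k := by
      intro m
      induction m with
      | zero => intro i j k h _ hij hjk _; omega
      | succ m ih =>
        intro i j k hm hi hij hjk hkn
        have hik : i < k := lt_trans hij hjk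
        obtain ⟨hle, hlt⟩ := (hookMedian_eq_iff T hik).mp (hmed i k hi hik hkn)
        rw [countP_hookEntries, if_pos (le_refl _)] at hle
        rw [countP_hookEntries, if_neg (lt_irrefl _)] at hlt
        have hIoo : (Finset.Ioo i k).card = k - i - 1 := Nat.card_Ioo i k
        have hjmem : j ∈ Finset.Ioo i k := Finset.mem_Ioo.mpr ⟨hij, hjk⟩
        constructor
        · by_contra hc
          rw [min_le_iff] at hc
          push_neg at hc
          obtain ⟨h1, h2⟩ := hc
          obtain ⟨j', hj'mem, hA, hB⟩ : ∃ j' ∈ Finset.Ioo i k, T i j' ≤ T i k ∧ T j' k ≤ T i k := by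
            by_contra hno
            push_neg at hno
            set A := (Finset.Ioo i k).filter (fun r => T r k ≤ T i k) with hAd
            set B := (Finset.Ioo i k).filter (fun c => T i c ≤ T i k) with hBd
            have hdisj : A ∩ B = ∅ := by
              rw [Finset.eq_empty_iff_forall_notMem]
              intro j'' hj''
              rw [Finset.mem_inter, hAd, hBd] at hj''
              simp only [Finset.mem_filter] at hj''
              exact absurd hj''.1.2 (not_le.mpr (hno j'' hj''.1.1 hj''.2.2))
            have hsub : A ∪ B ⊆ (Finset.Ioo i k).erase j := by
              intro j'' hj''
              rw [Finset.mem_union, hAd, hBd] at hj''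
              simp only [Finset.mem_filter] at hj''
              rw [Finset.mem_erase]
              rcases hj'' with ⟨hm', hc'⟩ | ⟨hm', hc'⟩
              · exact ⟨by rintro rfl; omega, hm'⟩
              · exact ⟨by rintro rfl; omega, hm'⟩
            have h3 := Finset.card_le_card hsub
            have h4 := Finset.card_union_add_card_inter A B
            rw [hdisj] at h4
            have h5 : ((Finset.Ioo i k).erase j).card = (Finset.Ioo i k).card - 1 :=
              Finset.card_erase_of_mem hjmem
            simp at h4
            omega
          have hj' := Finset.mem_Ioo.mp hj'mem
          rcases lt_trichotomy j j' with h | h | h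
          · obtain ⟨l1a, l1b⟩ := ih i j j' (by omega) hi hij h (by omega)
            obtain ⟨l2a, l2b⟩ := ih j j' k (by omega) (by omega) h hj'.2 hkn
            rw [min_le_iff] at l1a l2a
            rw [le_max_iff] at l1b l2b
            rcases l1a with c1 | c1 <;> rcases l2b with c2 | c2 <;> omega
          · subst h; omega
          · obtain ⟨l1a, l1b⟩ := ih i j' j (by omega) hi hj'.1 h (by omega)
            obtain ⟨l2a, l2b⟩ := ih j' j k (by omega) (by omega) h hjk hkn
            rw [min_le_iff] at l1a l2a
            rw [le_max_iff] at l1b l2b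
            rcases l1b with c1 | c1 <;> rcases l2a with c2 | c2 <;> omega
        · by_contra hc
          rw [le_max_iff] at hc
          push_neg at hc
          obtain ⟨h1, h2⟩ := hc
          obtain ⟨j', hj'mem, hA, hB⟩ : ∃ j' ∈ Finset.Ioo i k, T i k ≤ T i j' ∧ T i k ≤ T j' k := by
            by_contra hno
            push_neg at hno
            set A := (Finset.Ioo i k).filter (fun r => T r k < T i k) with hAd
            set B := (Finset.Ioo i k).filter (fun c => T i c < T i k) with hBd
            have hsub : Finset.Ioo i k ⊆ A ∪ B := by
              intro j'' hj''
              rw [Finset.mem_union, hAd, hBd]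
              simp only [Finset.mem_filter]
              rcases le_or_gt (T i k) (T i j'') with h' | h'
              · left; exact ⟨hj'', hno j'' hj'' h'⟩
              · right; exact ⟨hj'', h'⟩
            have hjin : j ∈ A ∩ B := by
              rw [Finset.mem_inter, hAd, hBd]
              simp only [Finset.mem_filter]
              exact ⟨⟨hjmem, h2⟩, hjmem, h1⟩
            have h3 := Finset.card_le_card hsub
            have h4 := Finset.card_union_add_card_inter A B
            have h5 : 1 ≤ (A ∩ B).card := Finset.card_pos.mpr ⟨j, hjin⟩
            have h6 : (A ∪ B).card ≤ (Finset.Ioo i k).card :=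
              Finset.card_le_card (Finset.union_subset (Finset.filter_subset _ _)
                (Finset.filter_subset _ _))
            omega
          have hj' := Finset.mem_Ioo.mp hj'mem
          rcases lt_trichotomy j j' with h | h | h
          · obtain ⟨l1a, l1b⟩ := ih i j j' (by omega) hi hij h (by omega)
            obtain ⟨l2a, l2b⟩ := ih j j' k (by omega) (by omega) h hj'.2 hkn
            rw [min_le_iff] at l1a l2a
            rw [le_max_iff] at l1b l2b
            rcases l1b with c1 | c1 <;> rcases l2a with c2 | c2 <;> omega
          · subst h; omega
          · obtain ⟨l1a, l1b⟩ := ih i j' j (by omega) hi hj'.1 h (by omega)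
            obtain ⟨l2a, l2b⟩ := ih j' j k (by omega) (by omega) h hjk hkn
            rw [min_le_iff] at l1a l2a
            rw [le_max_iff] at l1b l2b
            rcases l1a with c1 | c1 <;> rcases l2b with c2 | c2 <;> omega
    exact fun i j k hi hij hjk hkn => key n i j k (by omega) hi hij hjk hkn
end
end

section
/- If T is a column-injective tableau for a permutation w and (i,j) ∈ ID(w), then the Lehmer form of the incremented tableau ↑_{(i,j)} T is obtained from the Lehmer form Λ(T) by adding 1 to the entry in box (i,j) and leaving all other entries unchanged. -/
open Classical

noncomputable section

lemma fcard_congr (s : Finset ℕ) (p q : ℕ → Prop) (h : ∀ x ∈ s, p x ↔ q x) :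
    (s.filter p).card = (s.filter q).card := by
  rw [Finset.filter_congr h]

lemma count_L1 (C : ℕ → Prop) (a0 b : ℕ)
    (h1 : 1 ≤ a0) (hab : a0 < b) (hC : C a0)
    (hmid : ∀ k, a0 < k → k < b → ¬ C k) :
    ((Finset.Ico 1 b).filter C).card = ((Finset.Ico 1 a0).filter C).card + 1 := by
  have hsplit : Finset.Ico 1 b = Finset.Ico 1 a0 ∪ Finset.Ico a0 b :=
    (Finset.Ico_union_Ico_eq_Ico h1 hab.le).symm
  have hupper : (Finset.Ico a0 b).filter C = {a0} := by
    ext k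
    simp only [Finset.mem_filter, Finset.mem_Ico, Finset.mem_singleton]
    constructor
    · rintro ⟨⟨h1k, h2k⟩, hCk⟩
      by_contra hne
      exact hmid k (lt_of_le_of_ne h1k (Ne.symm hne)) h2k hCk
    · rintro rfl; exact ⟨⟨le_refl _, hab⟩, hC⟩
  rw [hsplit, Finset.filter_union, Finset.card_union_of_disjoint, hupper]
  · simp
  · exact Finset.disjoint_filter_filter (Finset.Ico_disjoint_Ico_consecutive 1 a0 b)

lemma count_L2 (C C' : ℕ → Prop)
    (e a0 b : ℕ) (h1 : 1 ≤ a0) (hab : a0 < b)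
    (hoff : ∀ k, k ≠ a0 → k ≠ b → (C k ↔ C' k))
    (hCa : ¬ C a0) (hCb : C b) (hC'a : C' a0) (hC'b : ¬ C' b)
    (he : e ≤ a0 ∨ b < e) :
    ((Finset.Ico 1 e).filter C').card = ((Finset.Ico 1 e).filter C).card := by
  rcases he with he | he
  · refine fcard_congr _ _ _ fun k hk => ?_
    simp only [Finset.mem_Ico] at hk
    exact (hoff k (by omega) (by omega)).symm
  · have hset : (Finset.Ico 1 e).filter C' =
        insert a0 (((Finset.Ico 1 e).filter C).erase b) := by
      ext k
      simp only [Finset.mem_insert, Finset.mem_erase, Finset.mem_filter, Finset.mem_Ico]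
      by_cases hk1 : k = a0
      · subst hk1
        simp [hC'a]
        omega
      · by_cases hk2 : k = b
        · subst hk2
          simp [hC'b, hk1]
        · constructor
          · rintro ⟨hr, hc⟩
            exact Or.inr ⟨hk2, hr, (hoff k hk1 hk2).mpr hc⟩
          · rintro (rfl | ⟨_, hr, hc⟩)
            · exact absurd rfl hk1
            · exact ⟨hr, (hoff k hk1 hk2).mp hc⟩
    rw [hset]
    have hbmem : b ∈ (Finset.Ico 1 e).filter C := by
      simp only [Finset.mem_filter, Finset.mem_Ico]
      exact ⟨⟨by omega, he⟩, hCb⟩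
    have hamem : a0 ∉ ((Finset.Ico 1 e).filter C).erase b := by
      intro h
      exact hCa (Finset.mem_filter.mp (Finset.mem_of_mem_erase h)).2
    rw [Finset.card_insert_of_notMem hamem, Finset.card_erase_of_mem hbmem]
    have : 1 ≤ ((Finset.Ico 1 e).filter C).card := Finset.card_pos.mpr ⟨b, hbmem⟩
    omega

lemma count_L3 (C C' : ℕ → Prop) (a0 b : ℕ)
    (hab : a0 ≤ b)
    (hlow : ∀ k, k < a0 → (C k ↔ C' k))
    (hhigh : ∀ k, a0 ≤ k → k < b → ¬ C k) :
    ((Finset.Ico 1 b).filter C).card = ((Finset.Ico 1 a0).filter C').card := by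
  congr 1
  ext k
  simp only [Finset.mem_filter, Finset.mem_Ico]
  constructor
  · rintro ⟨⟨h1, h2⟩, hc⟩
    have hka : k < a0 := by
      by_contra h
      exact hhigh k (by omega) h2 hc
    exact ⟨⟨h1, hka⟩, (hlow k hka).mp hc⟩
  · rintro ⟨⟨h1, h2⟩, hc⟩
    exact ⟨⟨h1, by omega⟩, (hlow k h2).mpr hc⟩

lemma lehmer_congr' (T T' : ℕ → ℕ → ℕ) (a c : ℕ) (hentry : T' a c = T a c)
    (hcond : ∀ k, (∀ x, 1 ≤ x → x < a → T' x c ≠ k) ↔ (∀ x, 1 ≤ x → x < a → T x c ≠ k)) :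
    lehmer T' a c = lehmer T a c := by
  unfold lehmer
  rw [hentry]
  exact fcard_congr _ _ _ fun k _ => hcond k

lemma lehmer_congr (T T' : ℕ → ℕ → ℕ) (a c : ℕ) (hentry : T' a c = T a c)
    (hrows : ∀ x, 1 ≤ x → x < a → T' x c = T x c) :
    lehmer T' a c = lehmer T a c := by
  refine lehmer_congr' T T' a c hentry fun k => ⟨fun h x h1 h2 => ?_, fun h x h1 h2 => ?_⟩
  · rw [← hrows x h1 h2]; exact h x h1 h2
  · rw [hrows x h1 h2]; exact h x h1 h2

lemma lehmer_box (T T' : ℕ → ℕ → ℕ) (i j b : ℕ)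
    (hi1 : 1 ≤ i)
    (hrows : ∀ x, 1 ≤ x → x < i → T' x j = T x j)
    (hT'i : T' i j = b)
    (h1a0 : 1 ≤ T i j) (hab : T i j < b)
    (hCa0 : ∀ x, 1 ≤ x → x < i → T x j ≠ T i j)
    (hmid : ∀ k, T i j < k → k < b → ∃ x, 1 ≤ x ∧ x < i ∧ T x j = k) :
    lehmer T' i j = lehmer T i j + 1 := by
  unfold lehmer
  rw [hT'i]
  calc ((Finset.Ico 1 b).filter fun k => ∀ x, 1 ≤ x → x < i → T' x j ≠ k).card
      = ((Finset.Ico 1 b).filter fun k => ∀ x, 1 ≤ x → x < i → T x j ≠ k).card := by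
        refine fcard_congr _ _ _ fun k _ => ?_
        constructor <;> intro h x h1 h2
        · rw [← hrows x h1 h2]; exact h x h1 h2
        · rw [hrows x h1 h2]; exact h x h1 h2
    _ = ((Finset.Ico 1 (T i j)).filter fun k => ∀ x, 1 ≤ x → x < i → T x j ≠ k).card + 1 :=
        count_L1 _ (T i j) b h1a0 hab hCa0
          (fun k hk1 hk2 hC => by obtain ⟨x, h1, h2, h3⟩ := hmid k hk1 hk2; exact hC x h1 h2 h3)

lemma lehmer_row_swap (T T' : ℕ → ℕ → ℕ) (a j i b : ℕ)
    (hia : i < a) (hi1 : 1 ≤ i)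
    (hentry : T' a j = T a j)
    (hrows : ∀ x, 1 ≤ x → x < a → x ≠ i → T' x j = T x j)
    (hT'i : T' i j = b)
    (h1a0 : 1 ≤ T i j) (hab : T i j < b)
    (hC'a0 : ∀ x, 1 ≤ x → x < a → T' x j ≠ T i j)
    (hCb : ∀ x, 1 ≤ x → x < a → T x j ≠ b)
    (he : T a j ≤ T i j ∨ b < T a j) :
    lehmer T' a j = lehmer T a j := by
  unfold lehmer
  rw [hentry]
  refine count_L2 (fun k => ∀ x, 1 ≤ x → x < a → T x j ≠ k)
    (fun k => ∀ x, 1 ≤ x → x < a → T' x j ≠ k) (T a j) (T i j) b h1a0 hab ?_ ?_ hCb hC'a0 ?_ he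
  · intro k hk1 hk2
    constructor <;> intro h x h1 h2
    · by_cases hx : x = i
      · subst hx; rw [hT'i]; exact fun h' => hk2 h'.symm
      · rw [hrows x h1 h2 hx]; exact h x h1 h2
    · by_cases hx : x = i
      · subst hx; exact fun h' => hk1 h'.symm
      · rw [← hrows x h1 h2 hx]; exact h x h1 h2
  · intro h; exact h i hi1 hia rfl
  · intro h; exact h i hi1 hia hT'i

lemma lehmer_trade_top (T T' : ℕ → ℕ → ℕ) (i i'' j b : ℕ)
    (hi1 : 1 ≤ i) (hii : i < i'')
    (hrows : ∀ x, 1 ≤ x → x < i'' → x ≠ i → T' x j = T x j)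
    (hT'i : T' i j = b)
    (hT'top : T' i'' j = T i j)
    (hTtop : T i'' j = b)
    (hab : T i j < b)
    (hmid : ∀ k, T i j < k → k < b → ∃ x, 1 ≤ x ∧ x < i ∧ T x j = k) :
    lehmer T' i'' j = lehmer T i'' j := by
  unfold lehmer
  rw [hT'top, hTtop]
  refine (count_L3 (fun k => ∀ x, 1 ≤ x → x < i'' → T x j ≠ k)
    (fun k => ∀ x, 1 ≤ x → x < i'' → T' x j ≠ k) (T i j) b hab.le ?_ ?_).symm
  · intro k hk
    constructor <;> intro h x h1 h2
    · by_cases hx : x = i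
      · subst hx; rw [hT'i]; omega
      · rw [hrows x h1 h2 hx]; exact h x h1 h2
    · by_cases hx : x = i
      · subst hx; omega
      · rw [← hrows x h1 h2 hx]; exact h x h1 h2
  · intro k hk1 hk2 hC
    rcases eq_or_lt_of_le hk1 with h | h
    · exact hC i hi1 hii h
    · obtain ⟨x, h1, h2, h3⟩ := hmid k h hk2
      exact hC x h1 (h2.trans hii) h3

/-- Incrementing box `(i,j)` of a column-injective tableau for `w`
adds `1` to the entry of the Lehmer form in box `(i,j)` and leaves all other
entries of the Lehmer form unchanged. -/
theorem lehmer_increment {n : ℕ} (w : Equiv.Perm (Fin n)) (T T' : ℕ → ℕ → ℕ)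
    (i j : ℕ) (hT : ColInj w T) (hij : IsInv w i j) (hinc : IncrementAt T T' i j) :
    lehmer T' i j = lehmer T i j + 1 ∧
      ∀ a b, IsInv w a b → (a, b) ≠ (i, j) → lehmer T' a b = lehmer T a b := by
  obtain ⟨hzero, hinj⟩ := hT
  obtain ⟨b, hab, hmid, hnb, hcase⟩ := hinc
  have hi1 : 1 ≤ i := hij.1
  have hijlt : i < j := hij.2.1
  have ha0ne : T i j ≠ 0 := (hzero i j).2 hij
  have h1a0 : 1 ≤ T i j := Nat.one_le_iff_ne_zero.mpr ha0ne
  -- uniqueness of nonzero values in column j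
  have huniq : ∀ x y, T x j ≠ 0 → T x j = T y j → x = y := by
    intro x y hx hxy
    have hy : T y j ≠ 0 := hxy ▸ hx
    have hxin := (hzero x j).1 hx
    have hyin := (hzero y j).1 hy
    by_contra hne
    rcases Nat.lt_or_ge x y with h | h
    · exact hinj x y j hxin.1 h hyin.2.1 hx hy hxy
    · exact hinj y x j hyin.1 (by omega) hxin.2.1 hy hx hxy.symm
  have ha0loc : ∀ x, T x j = T i j → x = i := fun x hx =>
    huniq x i (hx ▸ ha0ne) hx
  have hCa0 : ∀ x, 1 ≤ x → x < i → T x j ≠ T i j := by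
    intro x h1 h2 hx
    have := ha0loc x hx
    omega
  -- any value in (T i j, b) lives strictly below row i
  have hmidloc : ∀ k, T i j < k → k < b → ∀ x, T x j = k → x < i := by
    intro k hk1 hk2 x hx
    obtain ⟨y, hy1, hy2, hy3⟩ := hmid k hk1 hk2
    have : x = y := huniq x y (by omega) (by rw [hx, hy3])
    omega
  rcases hcase with ⟨habsent, rfl⟩ | ⟨i'', hii'', hbval, rfl⟩
  · -- pure increment
    set T' : ℕ → ℕ → ℕ := fun a c => if a = i ∧ c = j then b else T a c with hT'def
    have hT'i : T' i j = b := by simp [hT'def]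
    have hT'off : ∀ x c, ¬(x = i ∧ c = j) → T' x c = T x c := by
      intro x c h; simp [hT'def, h]
    constructor
    · exact lehmer_box T T' i j b hi1
        (fun x h1 h2 => hT'off x j (by omega)) hT'i h1a0 hab hCa0 hmid
    · intro a c hinv hne
      have hne' : ¬(a = i ∧ c = j) := by
        rintro ⟨rfl, rfl⟩; exact hne rfl
      by_cases hc : c = j
      · subst c
        have hai : a ≠ i := fun h => hne' ⟨h, rfl⟩
        have ha1 : 1 ≤ a := hinv.1
        have hajlt : a < j := hinv.2.1
        have haT : T a j ≠ 0 := (hzero a j).2 hinv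
        rcases Nat.lt_or_ge a i with h | h
        · exact lehmer_congr T T' a j (hT'off a j (by omega))
            (fun x h1 h2 => hT'off x j (by omega))
        · have hia : i < a := by omega
          refine lehmer_row_swap T T' a j i b hia hi1 (hT'off a j (by omega))
            (fun x h1 h2 hx => hT'off x j (by simp [hx])) hT'i h1a0 hab ?_ ?_ ?_
          · -- no entry below a in T' equals T i j
            intro x h1 h2 hx
            by_cases hxi : x = i
            · subst hxi; rw [hT'i] at hx; omega
            · rw [hT'off x j (by simp [hxi])] at hx
              have := ha0loc x hx
              omega
          · intro x h1 h2 hx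
            exact habsent x h1 hx
          · -- T a j ≤ T i j ∨ b < T a j
            by_contra hcon
            push_neg at hcon
            obtain ⟨he1, he2⟩ := hcon
            have hneb : T a j ≠ b := habsent a ha1
            have : T a j < b := by omega
            have := hmidloc (T a j) he1 this a rfl
            omega
      · -- different column: nothing changed
        exact lehmer_congr T T' a c (hT'off a c (by tauto))
          (fun x h1 h2 => hT'off x c (by tauto))
  · -- trade increment
    set T' : ℕ → ℕ → ℕ := fun a c =>
      if a = i ∧ c = j then b else if a = i'' ∧ c = j then T i j else T a c with hT'def
    have hbne0 : b ≠ 0 := by omega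
    have hi''lt : i'' < j := ((hzero i'' j).1 (hbval ▸ hbne0)).2.1
    have hbloc : ∀ x, T x j = b → x = i'' := fun x hx =>
      huniq x i'' (hx ▸ hbne0) (by rw [hx, hbval])
    have hne_ii : i ≠ i'' := by omega
    have hT'i : T' i j = b := by simp [hT'def]
    have hT'top : T' i'' j = T i j := by simp [hT'def, hne_ii.symm]
    have hT'off : ∀ x c, ¬(x = i ∧ c = j) → ¬(x = i'' ∧ c = j) → T' x c = T x c := by
      intro x c h h'; simp [hT'def, h, h']
    constructor
    · exact lehmer_box T T' i j b hi1
        (fun x h1 h2 => hT'off x j (by omega) (by omega)) hT'i h1a0 hab hCa0 hmid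
    · intro a c hinv hne
      have hne' : ¬(a = i ∧ c = j) := by
        rintro ⟨rfl, rfl⟩; exact hne rfl
      by_cases hc : c = j
      · subst c
        have hai : a ≠ i := fun h => hne' ⟨h, rfl⟩
        have ha1 : 1 ≤ a := hinv.1
        have hajlt : a < j := hinv.2.1
        have haT : T a j ≠ 0 := (hzero a j).2 hinv
        rcases Nat.lt_or_ge a i with h | h
        · exact lehmer_congr T T' a j (hT'off a j (by omega) (by omega))
            (fun x h1 h2 => hT'off x j (by omega) (by omega))
        · have hia : i < a := by omega
          rcases lt_trichotomy a i'' with h2 | h2 | h2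
          · -- i < a < i''
            refine lehmer_row_swap T T' a j i b hia hi1
              (hT'off a j (by omega) (by omega))
              (fun x hx1 hx2 hx3 => hT'off x j (by simp [hx3]) (by omega)) hT'i h1a0 hab ?_ ?_ ?_
            · intro x hx1 hx2 hx
              by_cases hxi : x = i
              · subst hxi; rw [hT'i] at hx; omega
              · rw [hT'off x j (by simp [hxi]) (by omega)] at hx
                have := ha0loc x hx
                omega
            · intro x hx1 hx2 hx
              have := hbloc x hx
              omega
            · by_contra hcon
              push_neg at hcon
              obtain ⟨he1, he2⟩ := hcon
              have hneb : T a j ≠ b := fun hx => by have := hbloc a hx; omega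
              have hlt : T a j < b := by omega
              have := hmidloc (T a j) he1 hlt a rfl
              omega
          · -- a = i'' : the trade partner
            subst h2
            exact lehmer_trade_top T T' i a j b hi1 hii''
              (fun x hx1 hx2 hx3 => hT'off x j (by simp [hx3]) (by omega)) hT'i hT'top hbval
              hab hmid
          · -- a > i'' : rows i and i'' swapped below a; multiset of values unchanged
            refine lehmer_congr' T T' a j (hT'off a j (by omega) (by omega)) fun k => ?_
            constructor <;> intro hcnd x hx1 hx2
            · -- T x j ≠ k given ∀ below in T'
              by_cases hxi : x = i
              · subst hxi
                have := hcnd i'' (by omega) (by omega)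
                rw [hT'top] at this
                exact this
              · by_cases hxi'' : x = i''
                · subst hxi''
                  have := hcnd i hi1 (by omega)
                  rw [hT'i, ← hbval] at this
                  exact this
                · rw [← hT'off x j (by simp [hxi]) (by simp [hxi''])]
                  exact hcnd x hx1 hx2
            · by_cases hxi : x = i
              · subst hxi
                rw [hT'i, ← hbval]
                exact hcnd i'' (by omega) (by omega)
              · by_cases hxi'' : x = i''
                · subst hxi''
                  rw [hT'top]
                  exact hcnd i hi1 hia
                · rw [hT'off x j (by simp [hxi]) (by simp [hxi''])]
                  exact hcnd x hx1 hx2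
      · exact lehmer_congr T T' a c (hT'off a c (by tauto) (by tauto))
          (fun x h1 h2 => hT'off x c (by tauto) (by tauto))
end
end

section
/- Let T, T' be column-injective tableaux for w ∈ S_n with T' = ↑_M T for a multiset M of boxes, and fix a box (i,j). Let R be the set of positive integers r with r < i, T(r,j) < T(i,j), and T'(r,j) > T'(i,j). Then |R| ≥ T(i,j) − T'(i,j); moreover, if (i,j) does not occur in M, then |R| = T(i,j) − T'(i,j). -/
open Classical

noncomputable section

/-! ### Auxiliary development for STATEMENT 5 -/

/-- Nonzero entries of column `j` (rows `≥ 1`) are pairwise distinct. -/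
def Dcol (j : ℕ) (S : ℕ → ℕ → ℕ) : Prop :=
  ∀ r r', 1 ≤ r → r < r' → S r j ≠ 0 → S r' j ≠ 0 → S r j ≠ S r' j

/-- Rows above `i` whose entry in column `j` exceeds that of row `i`. -/
def Uset (i j : ℕ) (S : ℕ → ℕ → ℕ) : Finset ℕ :=
  (Finset.Ico 1 i).filter fun r => S i j < S r j

/-- The potential function. -/
def phiP (i j : ℕ) (S : ℕ → ℕ → ℕ) : ℕ := S i j + (Uset i j S).card

lemma Dcol_ne {j : ℕ} {S : ℕ → ℕ → ℕ} (hD : Dcol j S) {r r' : ℕ} (h1 : 1 ≤ r)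
    (h1' : 1 ≤ r') (hne : r ≠ r') (h0 : S r j ≠ 0) (h0' : S r' j ≠ 0) :
    S r j ≠ S r' j := by
  rcases lt_or_gt_of_ne hne with h | h
  · exact hD r r' h1 h h0 h0'
  · exact (hD r' r h1' h h0' h0).symm

lemma witness_card {j p a b : ℕ} {S : ℕ → ℕ → ℕ} (hD : Dcol j S)
    (hwit : ∀ k, a < k → k < b → ∃ r, 1 ≤ r ∧ r < p ∧ S r j = k) :
    ((Finset.Ico 1 p).filter fun r => a < S r j ∧ S r j < b).card = b - a - 1 := by
  have h : ((Finset.Ico 1 p).filter fun r => a < S r j ∧ S r j < b).card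
      = (Finset.Ioo a b).card := by
    apply Finset.card_bij (fun r _ => S r j)
    · intro r hr
      simp only [Finset.mem_filter, Finset.mem_Ico] at hr
      simp only [Finset.mem_Ioo]
      exact ⟨hr.2.1, hr.2.2⟩
    · intro r₁ h₁ r₂ h₂ heq
      simp only [Finset.mem_filter, Finset.mem_Ico] at h₁ h₂
      by_contra hne
      exact Dcol_ne hD h₁.1.1 h₂.1.1 hne (by omega) (by omega) heq
    · intro k hk
      simp only [Finset.mem_Ioo] at hk
      obtain ⟨r, h1, h2, h3⟩ := hwit k hk.1 hk.2
      refine ⟨r, ?_, h3⟩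
      simp only [Finset.mem_filter, Finset.mem_Ico]
      exact ⟨⟨h1, h2⟩, by omega, by omega⟩
  rw [h, Nat.card_Ioo]

lemma filter_split {i j b : ℕ} {S : ℕ → ℕ → ℕ} (c : ℕ)
    (hnob : ∀ r, 1 ≤ r → r < i → S r j ≠ b) (hcb : c < b) :
    (Finset.Ico 1 i).filter (fun r => c < S r j) =
      ((Finset.Ico 1 i).filter fun r => b < S r j) ∪
        ((Finset.Ico 1 i).filter fun r => c < S r j ∧ S r j < b) := by
  ext r
  simp only [Finset.mem_union, Finset.mem_filter, Finset.mem_Ico]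
  constructor
  · rintro ⟨hr, h⟩
    have hb := hnob r hr.1 hr.2
    rcases lt_trichotomy (S r j) b with h' | h' | h'
    · exact Or.inr ⟨hr, h, h'⟩
    · exact absurd h' hb
    · exact Or.inl ⟨hr, h'⟩
  · rintro (⟨hr, h⟩ | ⟨hr, h, _⟩)
    · exact ⟨hr, by omega⟩
    · exact ⟨hr, h⟩

lemma step_col_ne {j p q : ℕ} {S S₁ : ℕ → ℕ → ℕ} (h : IncrementAt S S₁ p q)
    (hq : q ≠ j) : ∀ r, S₁ r j = S r j := by
  obtain ⟨b, _, _, _, hcase⟩ := h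
  have hjq : j ≠ q := Ne.symm hq
  rcases hcase with ⟨_, hfun⟩ | ⟨p₂, _, _, hfun⟩ <;> intro r <;> rw [hfun] <;>
    simp [hjq]

lemma step_row0 {j p q : ℕ} {S S₁ : ℕ → ℕ → ℕ} (h : IncrementAt S S₁ p q) :
    S 0 j ≤ S₁ 0 j ∧ (p = 0 → q = j → S 0 j < S₁ 0 j) := by
  obtain ⟨b, hab, _, _, hcase⟩ := h
  rcases hcase with ⟨_, hfun⟩ | ⟨p₂, hpp₂, _, hfun⟩ <;> rw [hfun] <;> simp only []
  · split_ifs with h1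
    · obtain ⟨h1a, h1b⟩ := h1
      rw [← h1a, ← h1b] at hab
      exact ⟨le_of_lt hab, fun _ _ => hab⟩
    · exact ⟨le_rfl, fun hp0 hqj => absurd ⟨hp0.symm, hqj.symm⟩ h1⟩
  · split_ifs with h1 h2
    · obtain ⟨h1a, h1b⟩ := h1
      rw [← h1a, ← h1b] at hab
      exact ⟨le_of_lt hab, fun _ _ => hab⟩
    · omega
    · exact ⟨le_rfl, fun hp0 hqj => absurd ⟨hp0.symm, hqj.symm⟩ h1⟩

lemma transportP {i j : ℕ} {S S₁ : ℕ → ℕ → ℕ} (hcol : ∀ r, S₁ r j = S r j) :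
    Uset i j S₁ = Uset i j S ∧ phiP i j S₁ = phiP i j S ∧ (Dcol j S₁ ↔ Dcol j S) := by
  have hU : Uset i j S₁ = Uset i j S := by
    ext r; simp [Uset, hcol]
  refine ⟨hU, by simp [phiP, hU, hcol], ?_⟩
  unfold Dcol
  simp only [hcol]

lemma step_main {i j p : ℕ} {S S₁ : ℕ → ℕ → ℕ} (hD : Dcol j S) (hp : 1 ≤ p)
    (h : IncrementAt S S₁ p j) :
    Dcol j S₁ ∧ phiP i j S ≤ phiP i j S₁ ∧
      (p ≠ i → S₁ i j ≤ S i j ∧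
        (1 ≤ S₁ i j → Uset i j S ⊆ Uset i j S₁ ∧ phiP i j S₁ = phiP i j S)) := by
  obtain ⟨b, hab, hwit, hnb, hcase⟩ := h
  rcases hcase with ⟨hall, hfun⟩ | ⟨p₂, hpp₂, hbp₂, hfun⟩
  · -- pure increment
    have hv : ∀ r c, S₁ r c = if r = p ∧ c = j then b else S r c := fun r c => by
      rw [hfun]
    have hvp : S₁ p j = b := by simp [hv]
    have hvo : ∀ r, r ≠ p → S₁ r j = S r j := fun r hr => by simp [hv, hr]
    have hD₁ : Dcol j S₁ := by
      intro r r' h1 hlt h0 h0'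
      rcases eq_or_ne r p with rfl | hrp
      · rw [hvp] at h0 ⊢
        rw [hvo r' (by omega)] at h0' ⊢
        exact fun he => hall r' (by omega) he.symm
      · rcases eq_or_ne r' p with rfl | hr'p
        · rw [hvo r hrp] at h0 ⊢
          rw [hvp] at h0' ⊢
          exact hall r h1
        · rw [hvo r hrp] at h0 ⊢
          rw [hvo r' hr'p] at h0' ⊢
          exact hD r r' h1 hlt h0 h0'
    refine ⟨hD₁, ?_⟩
    rcases lt_trichotomy i p with hpi | rfl | hpi
    · -- i < p
      have hvi : S₁ i j = S i j := hvo i (by omega)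
      have hUeq : Uset i j S₁ = Uset i j S := by
        ext r
        simp only [Uset, Finset.mem_filter, Finset.mem_Ico]
        refine and_congr_right fun hr => ?_
        rw [hvi, hvo r (by omega)]
      refine ⟨le_of_eq (by simp [phiP, hUeq, hvi]), fun _ =>
        ⟨le_of_eq hvi, fun _ => ⟨by rw [hUeq], by simp [phiP, hUeq, hvi]⟩⟩⟩
    · -- p = i
      have hrow : ∀ r, r < i → S₁ r j = S r j := fun r hr => hvo r (by omega)
      have hnob : ∀ r, 1 ≤ r → r < i → S r j ≠ b := fun r h1 _ => hall r h1
      have hU₁ : Uset i j S₁ = (Finset.Ico 1 i).filter fun r => b < S r j := by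
        ext r
        simp only [Uset, Finset.mem_filter, Finset.mem_Ico]
        refine and_congr_right fun hr => ?_
        rw [hvp, hrow r hr.2]
      have hsplit : Uset i j S =
          ((Finset.Ico 1 i).filter fun r => b < S r j) ∪
            ((Finset.Ico 1 i).filter fun r => S i j < S r j ∧ S r j < b) :=
        filter_split _ hnob hab
      have hdis : Disjoint ((Finset.Ico 1 i).filter fun r => b < S r j)
          ((Finset.Ico 1 i).filter fun r => S i j < S r j ∧ S r j < b) := by
        rw [Finset.disjoint_left]
        intro r h1 h2
        simp only [Finset.mem_filter, Finset.mem_Ico] at h1 h2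
        omega
      have hcard : (Uset i j S).card =
          (Uset i j S₁).card + (b - S i j - 1) := by
        rw [hsplit, Finset.card_union_of_disjoint hdis, hU₁, witness_card hD hwit]
      refine ⟨?_, fun hne => absurd rfl hne⟩
      simp only [phiP, hvp, hcard]
      omega
    · -- p < i
      have hvi : S₁ i j = S i j := hvo i (by omega)
      by_cases hcross : S p j ≤ S i j ∧ S i j < b
      · -- crossing forces S i j = 0 = S p j
        have hc0 : S i j = 0 ∧ S p j = 0 := by
          rcases Nat.lt_or_ge (S p j) (S i j) with hlt | hge
          · exfalso
            obtain ⟨r₀, g1, g2, g3⟩ := hwit (S i j) hlt hcross.2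
            exact Dcol_ne hD g1 (by omega) (by omega) (by omega) (by omega) g3
          · have heq : S p j = S i j := le_antisymm hcross.1 hge
            by_cases hz : S i j = 0
            · exact ⟨hz, by omega⟩
            · exact absurd heq
                (Dcol_ne hD hp (by omega) (by omega) (by omega) (by omega))
        have hpnot : p ∉ Uset i j S := by
          simp only [Uset, Finset.mem_filter, Finset.mem_Ico]
          rintro ⟨_, h2⟩
          omega
        have hsub2 : insert p (Uset i j S) ⊆ Uset i j S₁ := by
          intro r hr
          rcases Finset.mem_insert.mp hr with rfl | hr
          · simp only [Uset, Finset.mem_filter, Finset.mem_Ico]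
            refine ⟨⟨hp, hpi⟩, ?_⟩
            rw [hvi, hvp]
            omega
          · simp only [Uset, Finset.mem_filter, Finset.mem_Ico] at hr ⊢
            have hrp : r ≠ p := by
              intro he; subst he; omega
            rw [hvi, hvo r hrp]
            exact hr
        have hcard : (Uset i j S).card + 1 ≤ (Uset i j S₁).card := by
          rw [← Finset.card_insert_of_notMem hpnot]
          exact Finset.card_le_card hsub2
        constructor
        · simp only [phiP, hvi]
          omega
        · intro _
          refine ⟨le_of_eq hvi, fun h1 => absurd h1 ?_⟩
          rw [hvi, hc0.1]
          omega
      · -- no crossing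
        have hUeq : Uset i j S₁ = Uset i j S := by
          ext r
          simp only [Uset, Finset.mem_filter, Finset.mem_Ico]
          refine and_congr_right fun hr => ?_
          rw [hvi]
          rcases eq_or_ne r p with rfl | hrp
          · rw [hvp]
            omega
          · rw [hvo r hrp]
        refine ⟨le_of_eq (by simp [phiP, hUeq, hvi]), fun _ =>
          ⟨le_of_eq hvi, fun _ => ⟨by rw [hUeq], by simp [phiP, hUeq, hvi]⟩⟩⟩
  · -- trade increment with partner p₂
    have hv : ∀ r c, S₁ r c =
        if r = p ∧ c = j then b else if r = p₂ ∧ c = j then S p j else S r c :=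
      fun r c => by rw [hfun]
    have hp₂p : p₂ ≠ p := by omega
    have hvp : S₁ p j = b := by simp [hv]
    have hvp₂ : S₁ p₂ j = S p j := by simp [hv, hp₂p]
    have hvo : ∀ r, r ≠ p → r ≠ p₂ → S₁ r j = S r j := fun r h1 h2 => by
      simp [hv, h1, h2]
    have hbne : b ≠ 0 := by omega
    have hD₁ : Dcol j S₁ := by
      intro r r' h1 hlt h0 h0'
      have h1' : 1 ≤ r' := by omega
      have hp₂1 : 1 ≤ p₂ := by omega
      rcases eq_or_ne r p with rfl | hrp
      · rw [hvp] at h0 ⊢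
        rcases eq_or_ne r' p₂ with rfl | hr'p₂
        · rw [hvp₂] at h0' ⊢
          omega
        · have hr'p : r' ≠ r := by omega
          rw [hvo r' hr'p hr'p₂] at h0' ⊢
          rw [← hbp₂]
          exact Dcol_ne hD hp₂1 h1' (Ne.symm hr'p₂) (by rw [hbp₂]; exact hbne) h0'
      · rcases eq_or_ne r p₂ with rfl | hrp₂
        · rw [hvp₂] at h0 ⊢
          have hr'p : r' ≠ p := by omega
          have hr'p₂ : r' ≠ r := by omega
          rw [hvo r' hr'p hr'p₂] at h0' ⊢
          exact Dcol_ne hD hp h1' (by omega) h0 h0'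
        · rw [hvo r hrp hrp₂] at h0 ⊢
          rcases eq_or_ne r' p with rfl | hr'p
          · rw [hvp] at h0' ⊢
            rw [← hbp₂]
            exact Dcol_ne hD h1 hp₂1 (by omega) h0 (by rw [hbp₂]; exact hbne)
          · rcases eq_or_ne r' p₂ with rfl | hr'p₂
            · rw [hvp₂] at h0' ⊢
              exact Dcol_ne hD h1 hp (by omega) h0 h0'
            · rw [hvo r' hr'p hr'p₂] at h0' ⊢
              exact hD r r' h1 hlt h0 h0'
    refine ⟨hD₁, ?_⟩
    rcases lt_trichotomy i p with hpi | rfl | hpi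
    · -- i < p < p₂
      have hvi : S₁ i j = S i j := hvo i (by omega) (by omega)
      have hUeq : Uset i j S₁ = Uset i j S := by
        ext r
        simp only [Uset, Finset.mem_filter, Finset.mem_Ico]
        refine and_congr_right fun hr => ?_
        rw [hvi, hvo r (by omega) (by omega)]
      refine ⟨le_of_eq (by simp [phiP, hUeq, hvi]), fun _ =>
        ⟨le_of_eq hvi, fun _ => ⟨by rw [hUeq], by simp [phiP, hUeq, hvi]⟩⟩⟩
    · -- p = i, partner p₂ > i
      have hrow : ∀ r, r < i → S₁ r j = S r j := fun r hr =>
        hvo r (by omega) (by omega)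
      have hnob : ∀ r, 1 ≤ r → r < i → S r j ≠ b := by
        intro r h1 h2 he
        exact Dcol_ne hD h1 (by omega) (by omega) (by omega)
          (by rw [hbp₂]; exact hbne) (he.trans hbp₂.symm)
      have hU₁ : Uset i j S₁ = (Finset.Ico 1 i).filter fun r => b < S r j := by
        ext r
        simp only [Uset, Finset.mem_filter, Finset.mem_Ico]
        refine and_congr_right fun hr => ?_
        rw [hvp, hrow r hr.2]
      have hsplit : Uset i j S =
          ((Finset.Ico 1 i).filter fun r => b < S r j) ∪
            ((Finset.Ico 1 i).filter fun r => S i j < S r j ∧ S r j < b) :=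
        filter_split _ hnob hab
      have hdis : Disjoint ((Finset.Ico 1 i).filter fun r => b < S r j)
          ((Finset.Ico 1 i).filter fun r => S i j < S r j ∧ S r j < b) := by
        rw [Finset.disjoint_left]
        intro r h1 h2
        simp only [Finset.mem_filter, Finset.mem_Ico] at h1 h2
        omega
      have hcard : (Uset i j S).card =
          (Uset i j S₁).card + (b - S i j - 1) := by
        rw [hsplit, Finset.card_union_of_disjoint hdis, hU₁, witness_card hD hwit]
      refine ⟨?_, fun hne => absurd rfl hne⟩
      simp only [phiP, hvp, hcard]
      omega
    · -- p < i
      rcases eq_or_ne i p₂ with rfl | hp₂i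
      · -- trade with row i itself
        have hWcard := witness_card hD hwit
        have hUeq : Uset i j S₁ =
            insert p (Uset i j S ∪
              ((Finset.Ico 1 p).filter fun r => S p j < S r j ∧ S r j < b)) := by
          ext r
          simp only [Uset, Finset.mem_insert, Finset.mem_union, Finset.mem_filter,
            Finset.mem_Ico]
          constructor
          · rintro ⟨hr, hlt⟩
            rw [hvp₂] at hlt
            rcases eq_or_ne r p with rfl | hrp
            · exact Or.inl rfl
            · rw [hvo r hrp (by omega)] at hlt
              rcases lt_trichotomy (S r j) b with hb' | hb' | hb'
              · obtain ⟨r₀, g1, g2, g3⟩ := hwit (S r j) hlt hb'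
                have hrr₀ : r = r₀ := by
                  by_contra hne
                  exact Dcol_ne hD hr.1 g1 hne (by omega) (by omega) g3.symm
                exact Or.inr (Or.inr ⟨⟨hr.1, by omega⟩, hlt, hb'⟩)
              · exfalso
                exact Dcol_ne hD hr.1 (by omega) (by omega) (by omega)
                  (by rw [hbp₂]; exact hbne) (hb'.trans hbp₂.symm)
              · exact Or.inr (Or.inl ⟨hr, by omega⟩)
          · rintro (rfl | ⟨hr, hlt⟩ | ⟨hr, hm1, hm2⟩)
            · refine ⟨⟨hp, hpi⟩, ?_⟩
              rw [hvp₂, hvp]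
              exact hab
            · have hrp : r ≠ p := by
                intro he; subst he; omega
              refine ⟨hr, ?_⟩
              rw [hvp₂, hvo r hrp (by omega)]
              omega
            · refine ⟨⟨hr.1, by omega⟩, ?_⟩
              rw [hvp₂, hvo r (by omega) (by omega)]
              exact hm1
        have hpnotin : p ∉ Uset i j S ∪
            ((Finset.Ico 1 p).filter fun r => S p j < S r j ∧ S r j < b) := by
          simp only [Finset.mem_union, Uset, Finset.mem_filter, Finset.mem_Ico]
          rintro (⟨_, h2⟩ | ⟨⟨g1, g2⟩, _⟩) <;> omega
        have hdisj : Disjoint (Uset i j S)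
            ((Finset.Ico 1 p).filter fun r => S p j < S r j ∧ S r j < b) := by
          rw [Finset.disjoint_left]
          intro r h1 h2
          simp only [Uset, Finset.mem_filter, Finset.mem_Ico] at h1 h2
          omega
        have hcard : (Uset i j S₁).card =
            (Uset i j S).card + (b - S p j - 1) + 1 := by
          rw [hUeq, Finset.card_insert_of_notMem hpnotin,
            Finset.card_union_of_disjoint hdisj, hWcard]
        have hphieq : phiP i j S₁ = phiP i j S := by
          simp only [phiP, hvp₂, hcard, hbp₂]
          omega
        refine ⟨le_of_eq hphieq.symm, fun _ => ⟨?_, fun _ => ⟨?_, hphieq⟩⟩⟩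
        · rw [hvp₂, hbp₂]
          omega
        · intro r hr
          rw [hUeq]
          exact Finset.mem_insert_of_mem (Finset.mem_union_left _ hr)
      · -- partner is not row i
        have hvi : S₁ i j = S i j := hvo i (by omega) hp₂i
        by_cases hcross : S p j ≤ S i j ∧ S i j < b
        · have hc0 : S i j = 0 ∧ S p j = 0 := by
            rcases Nat.lt_or_ge (S p j) (S i j) with hlt | hge
            · exfalso
              obtain ⟨r₀, g1, g2, g3⟩ := hwit (S i j) hlt hcross.2
              exact Dcol_ne hD g1 (by omega) (by omega) (by omega) (by omega) g3
            · have heq : S p j = S i j := le_antisymm hcross.1 hge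
              by_cases hz : S i j = 0
              · exact ⟨hz, by omega⟩
              · exact absurd heq
                  (Dcol_ne hD hp (by omega) (by omega) (by omega) (by omega))
          have hpnot : p ∉ Uset i j S \ {p₂} := by
            simp only [Finset.mem_sdiff, Uset, Finset.mem_filter, Finset.mem_Ico]
            rintro ⟨⟨_, h2⟩, _⟩
            omega
          have hsub2 : insert p (Uset i j S \ {p₂}) ⊆ Uset i j S₁ := by
            intro r hr
            rcases Finset.mem_insert.mp hr with rfl | hr
            · simp only [Uset, Finset.mem_filter, Finset.mem_Ico]
              refine ⟨⟨hp, hpi⟩, ?_⟩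
              rw [hvi, hvp]
              omega
            · obtain ⟨hr, hrp₂⟩ := Finset.mem_sdiff.mp hr
              have hrp₂' : r ≠ p₂ := by simpa using hrp₂
              simp only [Uset, Finset.mem_filter, Finset.mem_Ico] at hr ⊢
              have hrp : r ≠ p := by
                intro he; subst he; omega
              rw [hvi, hvo r hrp hrp₂']
              exact hr
          have hcard1 : (Uset i j S).card ≤ (Uset i j S \ {p₂}).card + 1 := by
            calc (Uset i j S).card ≤ (insert p₂ (Uset i j S \ {p₂})).card := by
                  apply Finset.card_le_card
                  intro x hx
                  rcases eq_or_ne x p₂ with rfl | hxp₂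
                  · exact Finset.mem_insert_self _ _
                  · exact Finset.mem_insert_of_mem
                      (Finset.mem_sdiff.mpr ⟨hx, by simpa using hxp₂⟩)
              _ ≤ (Uset i j S \ {p₂}).card + 1 := Finset.card_insert_le _ _
          have hcard2 : (Uset i j S \ {p₂}).card + 1 ≤ (Uset i j S₁).card := by
            rw [← Finset.card_insert_of_notMem hpnot]
            exact Finset.card_le_card hsub2
          constructor
          · simp only [phiP, hvi]
            omega
          · intro _
            refine ⟨le_of_eq hvi, fun h1 => absurd h1 ?_⟩
            rw [hvi, hc0.1]
            omega
        · have hUeq : Uset i j S₁ = Uset i j S := by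
            ext r
            simp only [Uset, Finset.mem_filter, Finset.mem_Ico]
            refine and_congr_right fun hr => ?_
            rw [hvi]
            rcases eq_or_ne r p with rfl | hrp
            · rw [hvp]
              omega
            · rcases eq_or_ne r p₂ with rfl | hrp₂
              · rw [hvp₂, hbp₂]
                omega
              · rw [hvo r hrp hrp₂]
          refine ⟨le_of_eq (by simp [phiP, hUeq, hvi]), fun _ =>
            ⟨le_of_eq hvi, fun _ => ⟨by rw [hUeq], by simp [phiP, hUeq, hvi]⟩⟩⟩

lemma incBy_row0 {j : ℕ} : ∀ {M S T₂}, IncBy M S T₂ → S 0 j ≤ T₂ 0 j := by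
  intro M S T₂ h
  induction h with
  | nil T => exact le_rfl
  | cons hstep _ ih => exact le_trans (step_row0 (j := j) hstep).1 ih

lemma GE_aux (i j : ℕ) : ∀ {M S T₂}, IncBy M S T₂ → T₂ 0 j = 0 → Dcol j S →
    phiP i j S ≤ phiP i j T₂ := by
  intro M S T₂ h
  induction h with
  | nil T => exact fun _ _ => le_rfl
  | cons hstep htail ih =>
    rename_i M₀ S₀ Smid T₂' p q
    intro h0 hD
    by_cases hq : j = q
    · subst hq
      rcases Nat.eq_zero_or_pos p with rfl | hp
      · exfalso
        have h1 := (step_row0 (j := j) hstep).2 rfl rfl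
        have h2 := incBy_row0 (j := j) htail
        omega
      · obtain ⟨hD₁, hle, _⟩ := step_main (i := i) hD hp hstep
        exact le_trans hle (ih h0 hD₁)
    · obtain ⟨hU, hphi, hDiff⟩ := transportP (i := i) (step_col_ne hstep (Ne.symm hq))
      rw [← hphi]
      exact ih h0 (hDiff.mpr hD)

lemma EQ_aux (i j : ℕ) : ∀ {M S T₂}, IncBy M S T₂ → T₂ 0 j = 0 → 1 ≤ T₂ i j →
    Dcol j S → (i, j) ∉ M →
    T₂ i j ≤ S i j ∧ Uset i j S ⊆ Uset i j T₂ ∧ phiP i j S = phiP i j T₂ := by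
  intro M S T₂ h
  induction h with
  | nil T => exact fun _ _ _ _ => ⟨le_rfl, subset_rfl, rfl⟩
  | cons hstep htail ih =>
    rename_i M₀ S₀ Smid T₂' p q
    intro h0 h1 hD hnot
    have hne1 : (p, q) ≠ (i, j) := fun he =>
      hnot (Multiset.mem_cons.mpr (Or.inl he.symm))
    have hne2 : (i, j) ∉ M₀ := fun hm => hnot (Multiset.mem_cons_of_mem hm)
    by_cases hq : j = q
    · subst hq
      rcases Nat.eq_zero_or_pos p with rfl | hp
      · exfalso
        have ha := (step_row0 (j := j) hstep).2 rfl rfl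
        have hb := incBy_row0 (j := j) htail
        omega
      · have hpi : p ≠ i := by
          intro he
          exact hne1 (by rw [he])
        obtain ⟨hD₁, _, heqp⟩ := step_main (i := i) hD hp hstep
        obtain ⟨hle₁, hsub₁, hphi₁⟩ := ih h0 h1 hD₁ hne2
        obtain ⟨hle₂, hrest⟩ := heqp hpi
        obtain ⟨hsub₂, hphi₂⟩ := hrest (le_trans h1 hle₁)
        exact ⟨le_trans hle₁ hle₂, subset_trans hsub₂ hsub₁, hphi₂.symm.trans hphi₁⟩
    · obtain ⟨hU, hphi, hDiff⟩ := transportP (i := i) (step_col_ne hstep (Ne.symm hq))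
      obtain ⟨g1, g2, g3⟩ := ih h0 h1 (hDiff.mpr hD) hne2
      refine ⟨?_, ?_, ?_⟩
      · rw [← step_col_ne hstep (Ne.symm hq) i]
        exact g1
      · rw [← hU]
        exact g2
      · rw [← hphi]
        exact g3

/-- Counting rows `r < i` with `T(r,j) < T(i,j)` and `T'(r,j) > T'(i,j)`,
there are at least `T(i,j) − T'(i,j)` of them, with equality if `(i,j)` is not in `M`. -/
theorem card_ge_of_incBy {n : ℕ} (w : Equiv.Perm (Fin n)) (T T' : ℕ → ℕ → ℕ)
    (hT : ColInj w T) (hT' : ColInj w T') (M : Multiset (ℕ × ℕ))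
    (hM : IncBy M T T') (i j : ℕ) :
    (T i j : ℤ) - (T' i j : ℤ) ≤
        (((Finset.Ico 1 i).filter fun r => T r j < T i j ∧ T' i j < T' r j).card : ℤ) ∧
      ((i, j) ∉ M →
        ((((Finset.Ico 1 i).filter fun r => T r j < T i j ∧ T' i j < T' r j).card : ℤ)
          = (T i j : ℤ) - (T' i j : ℤ))) := by
  have hDT : Dcol j T := by
    intro r r' h1 hlt hz hz'
    rcases lt_or_ge r' j with hlj | hlj
    · exact hT.2 r r' j h1 hlt hlj hz hz'
    · exact absurd ((hT.1 r' j).mp hz').2.1 (by omega)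
  have h0 : T' 0 j = 0 := by
    by_contra hc
    exact absurd ((hT'.1 0 j).mp hc).1 (by omega)
  by_cases hc : T i j = 0
  · have hc' : T' i j = 0 := by
      by_contra hcc
      exact ((hT.1 i j).mpr ((hT'.1 i j).mp hcc)) hc
    have hempty : (Finset.Ico 1 i).filter
        (fun r => T r j < T i j ∧ T' i j < T' r j) = ∅ := by
      rw [Finset.filter_eq_empty_iff]
      intro r _
      rw [hc]
      rintro ⟨h1, _⟩
      omega
    rw [hempty, hc, hc']
    simp
  · have hinv := (hT.1 i j).mp hc
    have hi1 : 1 ≤ i := hinv.1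
    have hc' : 1 ≤ T' i j := by
      have := (hT'.1 i j).mpr hinv
      omega
    have hGE := GE_aux i j hM h0 hDT
    simp only [phiP] at hGE
    constructor
    · have hsub : Uset i j T' ⊆
          ((Finset.Ico 1 i).filter fun r => T r j < T i j ∧ T' i j < T' r j) ∪
            Uset i j T := by
        intro r hr
        simp only [Uset, Finset.mem_filter, Finset.mem_union, Finset.mem_Ico] at hr ⊢
        rcases Nat.lt_or_ge (T r j) (T i j) with hlt | hge
        · exact Or.inl ⟨hr.1, hlt, hr.2⟩
        · refine Or.inr ⟨hr.1, ?_⟩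
          have hne : T r j ≠ T i j := by
            intro he
            exact Dcol_ne hDT hr.1.1 hi1 (by omega) (by omega) (by omega) he
          omega
      have hcard : (Uset i j T').card ≤
          ((Finset.Ico 1 i).filter fun r => T r j < T i j ∧ T' i j < T' r j).card +
            (Uset i j T).card :=
        le_trans (Finset.card_le_card hsub) (Finset.card_union_le _ _)
      omega
    · intro hMem
      obtain ⟨hle, hsub, hphi⟩ := EQ_aux i j hM h0 hc' hDT hMem
      simp only [phiP] at hphi
      have hReq : (Finset.Ico 1 i).filter
          (fun r => T r j < T i j ∧ T' i j < T' r j) =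
            Uset i j T' \ Uset i j T := by
        ext r
        simp only [Uset, Finset.mem_filter, Finset.mem_sdiff, Finset.mem_Ico]
        constructor
        · rintro ⟨hr, h1, h2⟩
          exact ⟨⟨hr, h2⟩, fun hcon => by omega⟩
        · rintro ⟨⟨hr, h2⟩, h3⟩
          have h4 : ¬ (T i j < T r j) := fun hgt => h3 ⟨hr, hgt⟩
          have h5 : T r j ≠ T i j := by
            intro he
            exact Dcol_ne hDT hr.1 hi1 (by omega) (by omega) (by omega) he
          exact ⟨hr, by omega, h2⟩
      have hUle : (Uset i j T).card ≤ (Uset i j T').card :=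
        Finset.card_le_card hsub
      rw [hReq, Finset.card_sdiff_of_subset hsub]
      omega
end
end

section
/- Let T, T' be column-injective tableaux for w ∈ S_n and fix 1 ≤ i < j < k ≤ n with T'(i,j) ≤ T(i,k) < T(i,j). Assume that for every positive integer r < i, the Λ-shapes Λ(r,i,j) and Λ(r,i,k) are balanced in both T and T', and that T' = ↑_M T for a multiset M of boxes not containing (i,k). Then T'(i,j) > T'(i,k). -/
open Classical

noncomputable section

namespace S6

/-- number of rows `r ∈ [1, i)` whose column-`c` entry exceeds `t`. -/
def NN (i c t : ℕ) (S : ℕ → ℕ → ℕ) : ℕ :=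
  ((Finset.Ico 1 i).filter fun r => t < S r c).card

/-- the key potential: count of larger entries above plus the entry itself. -/
def Ps (i c : ℕ) (S : ℕ → ℕ → ℕ) : ℕ := NN i c (S i c) S + S i c

/-- column-`c` injectivity on nonzero entries in rows `≥ 1`. -/
def CInj (c : ℕ) (S : ℕ → ℕ → ℕ) : Prop :=
  ∀ r r', 1 ≤ r → 1 ≤ r' → r ≠ r' → S r c ≠ 0 → S r c ≠ S r' c

lemma NN_congr {i c t : ℕ} {S S₁ : ℕ → ℕ → ℕ}
    (h : ∀ r, 1 ≤ r → r < i → S₁ r c = S r c) : NN i c t S₁ = NN i c t S := by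
  unfold NN
  congr 1
  apply Finset.filter_congr
  intro r hr
  rw [Finset.mem_Ico] at hr
  rw [h r hr.1 hr.2]

lemma Ps_congr {i c : ℕ} {S S₁ : ℕ → ℕ → ℕ}
    (h : ∀ r, r ≤ i → S₁ r c = S r c) : Ps i c S₁ = Ps i c S := by
  unfold Ps
  rw [h i le_rfl, NN_congr (fun r _ h2 => h r (le_of_lt h2))]

lemma CInj_congr {c : ℕ} {S S₁ : ℕ → ℕ → ℕ} (h : ∀ r, S₁ r c = S r c)
    (hi : CInj c S) : CInj c S₁ := by
  intro r r' h1 h2 h3 h4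
  rw [h r, h r']
  exact hi r r' h1 h2 h3 (by rwa [h r] at h4)

lemma card_filter_insert_erase {s : Finset ℕ} {a : ℕ} (ha : a ∈ s) (p : ℕ → Prop)
    [DecidablePred p] :
    (s.filter p).card = ((s.erase a).filter p).card + (if p a then 1 else 0) := by
  conv_lhs => rw [← Finset.insert_erase ha]
  rw [Finset.filter_insert]
  split_ifs with h
  · rw [Finset.card_insert_of_notMem (by simp)]
  · omega

lemma NN_single {i c a₀ : ℕ} {S S₁ : ℕ → ℕ → ℕ} (h1 : 1 ≤ a₀) (h2 : a₀ < i)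
    (hch : ∀ r, 1 ≤ r → r < i → r ≠ a₀ → S₁ r c = S r c) (t : ℕ) :
    NN i c t S₁ + (if t < S a₀ c then 1 else 0)
      = NN i c t S + (if t < S₁ a₀ c then 1 else 0) := by
  have ha : a₀ ∈ Finset.Ico 1 i := Finset.mem_Ico.mpr ⟨h1, h2⟩
  unfold NN
  rw [card_filter_insert_erase ha (fun r => t < S₁ r c),
    card_filter_insert_erase ha (fun r => t < S r c)]
  have he : ((Finset.Ico 1 i).erase a₀).filter (fun r => t < S₁ r c)
      = ((Finset.Ico 1 i).erase a₀).filter (fun r => t < S r c) := by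
    apply Finset.filter_congr
    intro r hr
    rw [Finset.mem_erase, Finset.mem_Ico] at hr
    rw [hch r hr.2.1 hr.2.2 hr.1]
  rw [he]
  split_ifs <;> omega

lemma NN_split {i c x b : ℕ} (S : ℕ → ℕ → ℕ) (hxb : x ≤ b) :
    NN i c x S = NN i c b S
      + ((Finset.Ico 1 i).filter fun r => x < S r c ∧ S r c ≤ b).card := by
  unfold NN
  rw [← Finset.card_union_of_disjoint ?hd]
  case hd =>
    rw [Finset.disjoint_left]
    intro r h1 h2
    simp only [Finset.mem_filter] at h1 h2
    omega
  congr 1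
  ext r
  simp only [Finset.mem_union, Finset.mem_filter]
  constructor
  · rintro ⟨hr, h⟩
    by_cases hb : b < S r c
    · exact Or.inl ⟨hr, hb⟩
    · exact Or.inr ⟨hr, h, by omega⟩
  · rintro (⟨hr, h⟩ | ⟨hr, h1', h2'⟩) <;> exact ⟨by assumption, by omega⟩

lemma card_mid {i c a₀ x b : ℕ} {S : ℕ → ℕ → ℕ} (hinj : CInj c S) (hxb : x < b)
    (hfill : ∀ y, x < y → y < b → ∃ r', 1 ≤ r' ∧ r' < a₀ ∧ S r' c = y)
    (hai : a₀ ≤ i) (hnb : ∀ r, 1 ≤ r → r < i → S r c ≠ b) :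
    ((Finset.Ico 1 i).filter fun r => x < S r c ∧ S r c ≤ b).card = b - x - 1 := by
  have : ((Finset.Ico 1 i).filter fun r => x < S r c ∧ S r c ≤ b).card
      = (Finset.Ioo x b).card := by
    apply Finset.card_bij (fun r _ => S r c)
    · intro r hr
      simp only [Finset.mem_filter, Finset.mem_Ico] at hr
      have := hnb r hr.1.1 hr.1.2
      simp only [Finset.mem_Ioo]
      omega
    · intro r1 hr1 r2 hr2 heq
      simp only [Finset.mem_filter, Finset.mem_Ico] at hr1 hr2
      by_contra hne
      exact hinj r1 r2 hr1.1.1 hr2.1.1 hne (by omega) heq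
    · intro y hy
      rw [Finset.mem_Ioo] at hy
      obtain ⟨r', h1', h2', h3'⟩ := hfill y hy.1 hy.2
      refine ⟨r', ?_, h3'⟩
      simp only [Finset.mem_filter, Finset.mem_Ico]
      omega
  rw [this, Nat.card_Ioo]

lemma NN_swap {i c t a₀ i'' : ℕ} {S S₁ : ℕ → ℕ → ℕ}
    (h1 : 1 ≤ a₀) (h2 : a₀ < i) (h3 : 1 ≤ i'') (h4 : i'' < i) (hne : a₀ ≠ i'')
    (e1 : S₁ a₀ c = S i'' c) (e2 : S₁ i'' c = S a₀ c)
    (e3 : ∀ r, r ≠ a₀ → r ≠ i'' → S₁ r c = S r c) :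
    NN i c t S₁ = NN i c t S := by
  unfold NN
  apply Finset.card_nbij' (fun r => if r = a₀ then i'' else if r = i'' then a₀ else r)
    (fun r => if r = a₀ then i'' else if r = i'' then a₀ else r)
  · intro r hr
    simp only [Finset.mem_coe, Finset.mem_filter, Finset.mem_Ico] at hr ⊢
    split_ifs with hh1 hh2
    · rw [hh1, e1] at hr; exact ⟨⟨h3, h4⟩, hr.2⟩
    · rw [hh2, e2] at hr; exact ⟨⟨h1, h2⟩, hr.2⟩
    · rw [e3 r hh1 hh2] at hr; exact hr
  · intro r hr
    simp only [Finset.mem_coe, Finset.mem_filter, Finset.mem_Ico] at hr ⊢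
    split_ifs with hh1 hh2
    · refine ⟨⟨h3, h4⟩, ?_⟩; rw [e2]; rw [hh1] at hr; exact hr.2
    · refine ⟨⟨h1, h2⟩, ?_⟩; rw [e1]; rw [hh2] at hr; exact hr.2
    · rw [e3 r hh1 hh2]; exact hr
  · intro r _; dsimp only; split_ifs <;> omega
  · intro r _; dsimp only; split_ifs <;> omega


lemma incrementAt_col_ne {S S₁ : ℕ → ℕ → ℕ} {a₀ c₀ : ℕ} (h : IncrementAt S S₁ a₀ c₀)
    {c : ℕ} (hc : c ≠ c₀) : ∀ r, S₁ r c = S r c := by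
  obtain ⟨b, _, _, _, hcase⟩ := h
  rcases hcase with ⟨_, hS⟩ | ⟨i'', _, _, hS⟩ <;> intro r <;> rw [hS] <;> simp [hc]

lemma incrementAt_val_le {S S₁ : ℕ → ℕ → ℕ} {a₀ c₀ : ℕ} (h : IncrementAt S S₁ a₀ c₀)
    (i k : ℕ) (hne : ¬(a₀ = i ∧ c₀ = k)) : S₁ i k ≤ S i k := by
  obtain ⟨b, hxb, _, _, hcase⟩ := h
  rcases hcase with ⟨_, hS⟩ | ⟨i'', hii, hbv, hS⟩
  · rw [hS]; simp only
    rw [if_neg (fun hh => hne ⟨hh.1.symm, hh.2.symm⟩)]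
  · rw [hS]; simp only
    rw [if_neg (fun hh => hne ⟨hh.1.symm, hh.2.symm⟩)]
    by_cases h2 : i = i'' ∧ k = c₀
    · rw [if_pos h2]
      have hik : S i k = b := by rw [h2.1, h2.2]; exact hbv
      omega
    · rw [if_neg h2]

lemma incrementAt_row0_le {S S₁ : ℕ → ℕ → ℕ} {a₀ c₀ : ℕ} (h : IncrementAt S S₁ a₀ c₀)
    (c : ℕ) : S 0 c ≤ S₁ 0 c := by
  obtain ⟨b, hxb, _, _, hcase⟩ := h
  rcases hcase with ⟨_, hS⟩ | ⟨i'', hii, hbv, hS⟩ <;> rw [hS] <;> simp only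
  · by_cases h2 : 0 = a₀ ∧ c = c₀
    · rw [if_pos h2]
      rw [← h2.1, ← h2.2] at hxb
      omega
    · rw [if_neg h2]
  · by_cases h2 : 0 = a₀ ∧ c = c₀
    · rw [if_pos h2]
      rw [← h2.1, ← h2.2] at hxb
      omega
    · rw [if_neg h2]
      rw [if_neg (fun hh : 0 = i'' ∧ c = c₀ => by omega)]

lemma incrementAt_row0_pos {S S₁ : ℕ → ℕ → ℕ} {c₀ : ℕ} (h : IncrementAt S S₁ 0 c₀) :
    1 ≤ S₁ 0 c₀ := by
  obtain ⟨b, hxb, _, _, hcase⟩ := h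
  rcases hcase with ⟨_, hS⟩ | ⟨i'', hii, hbv, hS⟩ <;> rw [hS] <;> simp only <;>
    split_ifs with hh <;> first | omega | simp at hh

lemma step (i : ℕ) {S S₁ : ℕ → ℕ → ℕ} {a₀ c : ℕ} (h : IncrementAt S S₁ a₀ c)
    (hinj : CInj c S) (h0 : S 0 c = 0) (ha : 1 ≤ a₀) :
    CInj c S₁ ∧ S₁ 0 c = 0 ∧ (a₀ ≠ i → S₁ i c ≤ S i c) ∧
      (a₀ ≠ i → 1 ≤ S i c → Ps i c S₁ = Ps i c S) ∧ Ps i c S ≤ Ps i c S₁ := by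
  obtain ⟨b, hxb, hfill, hnb, hcase⟩ := h
  have hb1 : 1 ≤ b := by omega
  rcases hcase with ⟨habs, hS⟩ | ⟨i'', hii, hbval, hS⟩
  -- ===================== PURE CASE =====================
  · have hvc : S₁ a₀ c = b := by rw [hS]; simp
    have hvo : ∀ r, r ≠ a₀ → S₁ r c = S r c := by
      intro r hr; rw [hS]; simp only; rw [if_neg (fun hh => hr hh.1)]
    have hinj₁ : CInj c S₁ := by
      intro r r' hr hr' hne hne0
      by_cases h1 : r = a₀
      · rw [h1, hvc, hvo r' (fun hh => hne (h1.trans hh.symm))]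
        exact fun heq => habs r' hr' heq.symm
      · rw [hvo r h1]
        by_cases h2 : r' = a₀
        · rw [h2, hvc]
          exact habs r hr
        · rw [hvo r' h2]
          exact hinj r r' hr hr' hne (by rwa [hvo r h1] at hne0)
    have h0₁ : S₁ 0 c = 0 := by rw [hvo 0 (by omega)]; exact h0
    have hvle : a₀ ≠ i → S₁ i c ≤ S i c :=
      fun hne => le_of_eq (hvo i (fun hh => hne hh.symm))
    have heqq : a₀ ≠ i → 1 ≤ S i c → Ps i c S₁ = Ps i c S := by
      intro hne hxi
      rcases Nat.lt_or_ge a₀ i with hai | hai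
      · have hi1 : 1 ≤ i := by omega
        have hiv : S₁ i c = S i c := hvo i (fun hh => hne hh.symm)
        have key : S i c < b ↔ S i c < S a₀ c := by
          constructor
          · intro hlt
            by_contra hcon
            push_neg at hcon
            rcases Nat.eq_or_lt_of_le hcon with heq2 | hlt2
            · exact hinj a₀ i ha hi1 hne (by omega) heq2
            · obtain ⟨r', hr1, hr2, hr3⟩ := hfill (S i c) hlt2 hlt
              exact hinj r' i hr1 hi1 (by omega) (by omega) hr3
          · intro hlt; omega
        have hs := NN_single (S := S) (S₁ := S₁) ha hai
          (fun r _ _ h3 => hvo r h3) (S i c)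
        have hind : (if S i c < S₁ a₀ c then 1 else 0)
            = (if S i c < S a₀ c then 1 else 0) := by
          rw [hvc]
          by_cases hbb : S i c < b
          · rw [if_pos hbb, if_pos (key.mp hbb)]
          · rw [if_neg hbb, if_neg (fun hh => hbb (by omega))]
        rw [hind] at hs
        have hNN : NN i c (S i c) S₁ = NN i c (S i c) S := Nat.add_right_cancel hs
        unfold Ps
        rw [hiv, hNN]
      · exact Ps_congr (fun r hri => hvo r (by omega))
    refine ⟨hinj₁, h0₁, hvle, heqq, ?_⟩
    by_cases hne : a₀ = i
    · subst hne
      have hsplit := NN_split (i := a₀) (c := c) (x := S a₀ c) (b := b) S (le_of_lt hxb)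
      have hmid := card_mid (i := a₀) hinj hxb hfill le_rfl (fun r hr1 _ => habs r hr1)
      have hNb : NN a₀ c b S₁ = NN a₀ c b S := NN_congr (fun r _ h2 => hvo r (by omega))
      unfold Ps
      rw [hvc, hNb, hsplit, hmid]
      omega
    · by_cases hxi : 1 ≤ S i c
      · exact le_of_eq (heqq hne hxi).symm
      · rcases Nat.lt_or_ge a₀ i with hai | hai
        · have hiv : S₁ i c = S i c := hvo i (fun hh => hne hh.symm)
          unfold Ps
          rw [hiv]
          have hmono : NN i c (S i c) S ≤ NN i c (S i c) S₁ := by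
            apply Finset.card_le_card
            intro r hr
            simp only [Finset.mem_filter] at hr ⊢
            refine ⟨hr.1, ?_⟩
            by_cases hra : r = a₀
            · rw [hra, hvc]
              rw [hra] at hr
              omega
            · rw [hvo r hra]
              exact hr.2
          omega
        · exact le_of_eq (Ps_congr (fun r hri => hvo r (by omega))).symm
  -- ===================== TRADE CASE =====================
  · have hane : a₀ ≠ i'' := by omega
    have hi''1 : 1 ≤ i'' := by omega
    have val : ∀ p, S₁ p c = if p = a₀ then b else if p = i'' then S a₀ c else S p c := by
      intro p
      rw [hS]; simp only
      by_cases hp : p = a₀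
      · rw [if_pos ⟨hp, trivial⟩, if_pos hp]
      · rw [if_neg (fun hh => hp hh.1), if_neg hp]
        by_cases hq : p = i''
        · rw [if_pos ⟨hq, trivial⟩, if_pos hq]
        · rw [if_neg (fun hh => hq hh.1), if_neg hq]
    have hva : S₁ a₀ c = b := by rw [val a₀, if_pos rfl]
    have hvb : S₁ i'' c = S a₀ c := by
      rw [val i'', if_neg (fun hh => hane hh.symm), if_pos rfl]
    have hvo : ∀ r, r ≠ a₀ → r ≠ i'' → S₁ r c = S r c := by
      intro r hr1 hr2
      rw [val r, if_neg hr1, if_neg hr2]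
    have hbne0 : S i'' c ≠ 0 := by omega
    have hinj₁ : CInj c S₁ := by
      intro r r' hr hr' hne hne0
      rw [val r] at hne0 ⊢
      rw [val r']
      by_cases hr1 : r = a₀
      · rw [if_pos hr1] at hne0 ⊢
        by_cases hr2 : r' = a₀
        · exact absurd (hr1.trans hr2.symm) hne
        · rw [if_neg hr2]
          by_cases hr3 : r' = i''
          · rw [if_pos hr3]; omega
          · rw [if_neg hr3]
            intro heq
            exact hinj i'' r' hi''1 hr' (fun hh => hr3 hh.symm) hbne0 (hbval.trans heq)
      · rw [if_neg hr1] at hne0 ⊢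
        by_cases hr3 : r = i''
        · rw [if_pos hr3] at hne0 ⊢
          by_cases hr2 : r' = a₀
          · rw [if_pos hr2]; omega
          · rw [if_neg hr2]
            by_cases hr4 : r' = i''
            · exact absurd (hr3.trans hr4.symm) hne
            · rw [if_neg hr4]
              exact hinj a₀ r' ha hr' (fun hh => hr2 hh.symm) hne0
        · rw [if_neg hr3] at hne0 ⊢
          by_cases hr2 : r' = a₀
          · rw [if_pos hr2]
            intro heq
            exact hinj r i'' hr hi''1 hr3 hne0 (heq.trans hbval.symm)
          · rw [if_neg hr2]
            by_cases hr4 : r' = i''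
            · rw [if_pos hr4]
              exact hinj r a₀ hr ha hr1 hne0
            · rw [if_neg hr4]
              exact hinj r r' hr hr' hne hne0
    have h0₁ : S₁ 0 c = 0 := by rw [hvo 0 (by omega) (by omega)]; exact h0
    have hvle : a₀ ≠ i → S₁ i c ≤ S i c := by
      intro hne
      by_cases h4 : i = i''
      · rw [h4, hvb, hbval]; omega
      · rw [hvo i (fun hh => hne hh.symm) h4]
    have heqq : a₀ ≠ i → 1 ≤ S i c → Ps i c S₁ = Ps i c S := by
      intro hne hxi
      have hine : i ≠ a₀ := fun hh => hne hh.symm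
      rcases Nat.lt_or_ge a₀ i with hai | hai
      · have hi1 : 1 ≤ i := by omega
        rcases Nat.lt_trichotomy i'' i with hlt | heq3 | hgt
        · -- i'' < i : swap within rows < i
          have hNs := NN_swap (t := S i c) ha hai hi''1 hlt hane
            (hva.trans hbval.symm) hvb (fun r h1 h2 => hvo r h1 h2)
          have hiv : S₁ i c = S i c := hvo i hine (by omega)
          unfold Ps
          rw [hiv, hNs]
        · -- i'' = i : steal
          subst heq3
          have hs := NN_single (S := S) (S₁ := S₁) ha hai
            (fun r _ h2 h3 => hvo r h3 (by omega)) (S a₀ c)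
          rw [if_neg (lt_irrefl _),
            if_pos (show S a₀ c < S₁ a₀ c by rw [hva]; exact hxb)] at hs
          have hsplit := NN_split (i := i'') (c := c) (x := S a₀ c) (b := b) S (le_of_lt hxb)
          have hmid := card_mid (i := i'') hinj hxb hfill (le_of_lt hai)
            (fun r h1 h2 heq4 => hinj r i'' h1 hi''1 (by omega) (by omega)
              (heq4.trans hbval.symm))
          unfold Ps
          rw [hvb, hbval]
          omega
        · -- i'' > i
          have hiv : S₁ i c = S i c := hvo i hine (by omega)
          have key : S i c < b ↔ S i c < S a₀ c := by
            constructor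
            · intro hlt
              by_contra hcon
              push_neg at hcon
              rcases Nat.eq_or_lt_of_le hcon with heq2 | hlt2
              · exact hinj a₀ i ha hi1 hne (by omega) heq2
              · obtain ⟨r', hr1, hr2, hr3⟩ := hfill (S i c) hlt2 hlt
                exact hinj r' i hr1 hi1 (by omega) (by omega) hr3
            · intro hlt; omega
          have hs := NN_single (S := S) (S₁ := S₁) ha hai
            (fun r _ h2 h3 => hvo r h3 (by omega)) (S i c)
          have hind : (if S i c < S₁ a₀ c then 1 else 0)
              = (if S i c < S a₀ c then 1 else 0) := by
            rw [hva]
            by_cases hbb : S i c < b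
            · rw [if_pos hbb, if_pos (key.mp hbb)]
            · rw [if_neg hbb, if_neg (fun hh => hbb (by omega))]
          rw [hind] at hs
          have hNN : NN i c (S i c) S₁ = NN i c (S i c) S := Nat.add_right_cancel hs
          unfold Ps
          rw [hiv, hNN]
      · exact Ps_congr (fun r hri => hvo r (by omega) (by omega))
    refine ⟨hinj₁, h0₁, hvle, heqq, ?_⟩
    by_cases hne : a₀ = i
    · subst hne
      have hNb : NN a₀ c b S₁ = NN a₀ c b S :=
        NN_congr (fun r _ h2 => hvo r (by omega) (by omega))
      have hsplit := NN_split (i := a₀) (c := c) (x := S a₀ c) (b := b) S (le_of_lt hxb)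
      have hmid := card_mid (i := a₀) hinj hxb hfill le_rfl
        (fun r h1 h2 heq4 => hinj r i'' h1 hi''1 (by omega) (by omega)
          (heq4.trans hbval.symm))
      unfold Ps
      rw [hva, hNb, hsplit, hmid]
      omega
    · by_cases hxi : 1 ≤ S i c
      · exact le_of_eq (heqq hne hxi).symm
      · rcases Nat.lt_or_ge a₀ i with hai | hai
        · rcases Nat.lt_trichotomy i'' i with hlt | heq3 | hgt
          · have hNs := NN_swap (t := S i c) ha hai hi''1 hlt hane
              (hva.trans hbval.symm) hvb (fun r h1 h2 => hvo r h1 h2)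
            have hiv : S₁ i c = S i c := hvo i (fun hh => hne hh.symm) (by omega)
            unfold Ps
            rw [hiv, hNs]
          · exfalso
            rw [heq3] at hbval
            omega
          · have hiv : S₁ i c = S i c := hvo i (fun hh => hne hh.symm) (by omega)
            unfold Ps
            rw [hiv]
            have hmono : NN i c (S i c) S ≤ NN i c (S i c) S₁ := by
              apply Finset.card_le_card
              intro r hr
              simp only [Finset.mem_filter] at hr ⊢
              refine ⟨hr.1, ?_⟩
              have hrr := Finset.mem_Ico.mp hr.1
              by_cases hra : r = a₀
              · rw [hra, hva]
                omega
              · rw [hvo r hra (by omega)]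
                exact hr.2
            omega
        · exact le_of_eq (Ps_congr (fun r hri => hvo r (by omega) (by omega))).symm

lemma incBy_row0 {c : ℕ} {M : Multiset (ℕ × ℕ)} {S S' : ℕ → ℕ → ℕ} (h : IncBy M S S') :
    S 0 c ≤ S' 0 c := by
  induction h with
  | nil T => exact le_rfl
  | cons hstep hrest ih => exact le_trans (incrementAt_row0_le hstep c) ih

lemma incBy_k (i k : ℕ) {M : Multiset (ℕ × ℕ)} {S S' : ℕ → ℕ → ℕ} (h : IncBy M S S') :
    (i, k) ∉ M → CInj k S → S 0 k = 0 → S' 0 k = 0 → 1 ≤ S' i k →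
    S' i k ≤ S i k ∧ Ps i k S' = Ps i k S := by
  induction h with
  | nil T => exact fun _ _ _ _ _ => ⟨le_rfl, rfl⟩
  | @cons M₀ T₀ T₁ T₂ a₀ c₀ hstep hrest ih =>
    intro hnm hinj h0 h0' hpos
    have hnm1 : ¬(a₀ = i ∧ c₀ = k) := by
      intro hh
      apply hnm
      rw [hh.1, hh.2]
      exact Multiset.mem_cons_self _ _
    have hnm2 : (i, k) ∉ M₀ := fun hh => hnm (Multiset.mem_cons_of_mem hh)
    by_cases hc : c₀ = k
    · rw [hc] at hstep
      have ha0 : 1 ≤ a₀ := by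
        rcases Nat.eq_zero_or_pos a₀ with h00 | h00
        · exfalso
          subst h00
          have hp := incrementAt_row0_pos hstep
          have hle := incBy_row0 (c := k) hrest
          omega
        · exact h00
      have hne : a₀ ≠ i := fun hh => hnm1 ⟨hh, hc⟩
      obtain ⟨hinj₁, h0₁, hvle, heqs, _⟩ := step i hstep hinj h0 ha0
      obtain ⟨ih1, ih2⟩ := ih hnm2 hinj₁ h0₁ h0' hpos
      have hx : 1 ≤ T₀ i k := by
        have := hvle hne
        omega
      exact ⟨le_trans ih1 (hvle hne), ih2.trans (heqs hne hx)⟩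
    · have hagree : ∀ r, T₁ r k = T₀ r k :=
        incrementAt_col_ne hstep (fun hh => hc hh.symm)
      have hres := ih hnm2 (CInj_congr hagree hinj) (by rw [hagree 0]; exact h0) h0' hpos
      exact ⟨hres.1.trans (le_of_eq (hagree i)),
        hres.2.trans (Ps_congr (fun r _ => hagree r))⟩

lemma incBy_j (i j : ℕ) {M : Multiset (ℕ × ℕ)} {S S' : ℕ → ℕ → ℕ} (h : IncBy M S S') :
    CInj j S → S 0 j = 0 → S' 0 j = 0 → Ps i j S ≤ Ps i j S' := by
  induction h with
  | nil T => exact fun _ _ _ => le_rfl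
  | @cons M₀ T₀ T₁ T₂ a₀ c₀ hstep hrest ih =>
    intro hinj h0 h0'
    by_cases hc : c₀ = j
    · rw [hc] at hstep
      have ha0 : 1 ≤ a₀ := by
        rcases Nat.eq_zero_or_pos a₀ with h00 | h00
        · exfalso
          subst h00
          have hp := incrementAt_row0_pos hstep
          have hle := incBy_row0 (c := j) hrest
          omega
        · exact h00
      obtain ⟨hinj₁, h0₁, _, _, hge⟩ := step i hstep hinj h0 ha0
      exact le_trans hge (ih hinj₁ h0₁ h0')
    · have hagree : ∀ r, T₁ r j = T₀ r j :=
        incrementAt_col_ne hstep (fun hh => hc hh.symm)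
      have hres := ih (CInj_congr hagree hinj) (by rw [hagree 0]; exact h0) h0'
      exact (le_of_eq (Ps_congr (fun r _ => hagree r)).symm).trans hres
end S6

theorem entry_lt_of_balanced {n : ℕ} (w : Equiv.Perm (Fin n)) (T T' : ℕ → ℕ → ℕ)
    (hT : ColInj w T) (hT' : ColInj w T') (i j k : ℕ)
    (hi : 1 ≤ i) (hij : i < j) (hjk : j < k) (hkn : k ≤ n)
    (h1 : T' i j ≤ T i k) (h2 : T i k < T i j)
    (hbal : ∀ r, 1 ≤ r → r < i →
      LBal T r i j ∧ LBal T r i k ∧ LBal T' r i j ∧ LBal T' r i k)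
    (M : Multiset (ℕ × ℕ)) (hM : IncBy M T T') (hnot : (i, k) ∉ M) :
    T' i k < T' i j := by
  by_contra hcon0
  push_neg at hcon0
  have hd1 : 1 ≤ T i j := by omega
  have hInv : IsInv w i j := (hT.1 i j).mp (by omega)
  have ha1 : 1 ≤ T' i j := Nat.pos_of_ne_zero ((hT'.1 i j).mpr hInv)
  have hv1 : 1 ≤ T i k := le_trans ha1 h1
  have hv'1 : 1 ≤ T' i k := le_trans ha1 hcon0
  have hCI : ∀ (TT : ℕ → ℕ → ℕ), ColInj w TT → ∀ c, S6.CInj c TT := by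
    intro TT hTT c r r' h1' h2' h3' h4'
    by_cases h5 : TT r' c = 0
    · rw [h5]; exact h4'
    · have hv2 := (hTT.1 r' c).mp h5
      have hv1' := (hTT.1 r c).mp h4'
      rcases Nat.lt_or_ge r r' with hlt | hge
      · exact hTT.2 r r' c h1' hlt hv2.2.1 h4' h5
      · intro heq
        exact hTT.2 r' r c h2' (by omega) hv1'.2.1 h5 h4' heq.symm
  have hCIT := hCI T hT
  have hCIT' := hCI T' hT'
  have h0T : ∀ c, T 0 c = 0 := by
    intro c
    by_contra hh
    exact absurd ((hT.1 0 c).mp hh).1 (by omega)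
  have h0T' : ∀ c, T' 0 c = 0 := by
    intro c
    by_contra hh
    exact absurd ((hT'.1 0 c).mp hh).1 (by omega)
  have hK := S6.incBy_k i k hM hnot (hCIT k) (h0T k) (h0T' k) hv'1
  have hJ := S6.incBy_j i j hM (hCIT j) (h0T j) (h0T' j)
  -- endpoint identities
  have c1 : S6.NN i k (T i k) T = S6.NN i i (T i k) T := by
    unfold S6.NN
    congr 1
    apply Finset.filter_congr
    intro r hr
    rw [Finset.mem_Ico] at hr
    obtain ⟨hb1', hb2'⟩ := (hbal r hr.1 hr.2).2.1
    constructor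
    · intro hlt
      rcases le_total (T r i) (T i k) with hh | hh
      · rw [max_eq_right hh] at hb2'; omega
      · rw [max_eq_left hh] at hb2'; omega
    · intro hlt
      rw [min_eq_right (le_of_lt hlt)] at hb1'
      have hne : T r k ≠ T i k := hCIT k r i hr.1 hi (by omega) (by omega)
      omega
  have c2 : S6.NN i k (T' i k) T' = S6.NN i i (T' i k) T' := by
    unfold S6.NN
    congr 1
    apply Finset.filter_congr
    intro r hr
    rw [Finset.mem_Ico] at hr
    obtain ⟨hb1', hb2'⟩ := (hbal r hr.1 hr.2).2.2.2
    constructor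
    · intro hlt
      rcases le_total (T' r i) (T' i k) with hh | hh
      · rw [max_eq_right hh] at hb2'; omega
      · rw [max_eq_left hh] at hb2'; omega
    · intro hlt
      rw [min_eq_right (le_of_lt hlt)] at hb1'
      have hne : T' r k ≠ T' i k := hCIT' k r i hr.1 hi (by omega) (by omega)
      omega
  have c3 : S6.NN i i (T i j) T ≤ S6.NN i j (T i j) T := by
    apply Finset.card_le_card
    intro r hr
    simp only [Finset.mem_filter] at hr ⊢
    obtain ⟨hm, hlt⟩ := hr
    have hrr := Finset.mem_Ico.mp hm
    obtain ⟨hb1', hb2'⟩ := (hbal r hrr.1 hrr.2).1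
    refine ⟨hm, ?_⟩
    rw [min_eq_right (le_of_lt hlt)] at hb1'
    have hne : T r j ≠ T i j := hCIT j r i hrr.1 hi (by omega) (by omega)
    omega
  have c4 : S6.NN i j (T' i j) T' ≤ S6.NN i i (T' i j) T' := by
    apply Finset.card_le_card
    intro r hr
    simp only [Finset.mem_filter] at hr ⊢
    obtain ⟨hm, hlt⟩ := hr
    have hrr := Finset.mem_Ico.mp hm
    obtain ⟨hb1', hb2'⟩ := (hbal r hrr.1 hrr.2).2.2.1
    refine ⟨hm, ?_⟩
    rcases le_total (T' r i) (T' i j) with hh | hh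
    · rw [max_eq_right hh] at hb2'; omega
    · rw [max_eq_left hh] at hb2'; omega
  have c5 : S6.NN i i (T' i j) T' + T' i j ≤ S6.NN i i (T' i k) T' + T' i k := by
    have hsp := S6.NN_split (i := i) (c := i) (x := T' i j) (b := T' i k) T' hcon0
    have hcard : ((Finset.Ico 1 i).filter fun r => T' i j < T' r i ∧ T' r i ≤ T' i k).card
        ≤ (Finset.Ioc (T' i j) (T' i k)).card := by
      apply Finset.card_le_card_of_injOn (fun r => T' r i)
      · intro r hr
        simp only [Finset.mem_coe, Finset.mem_filter] at hr
        rw [Finset.mem_coe, Finset.mem_Ioc]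
        exact hr.2
      · intro r1 h1' r2 h2' heq
        simp only [Finset.coe_filter, Set.mem_setOf_eq] at h1' h2'
        by_contra hnn
        exact hCIT' i r1 r2 (Finset.mem_Ico.mp h1'.1).1 (Finset.mem_Ico.mp h2'.1).1 hnn
          (by omega) heq
    rw [Nat.card_Ioc] at hcard
    omega
  have c6 : S6.NN i i (T i k) T + T i k + 1 ≤ S6.NN i i (T i j) T + T i j := by
    have hsp := S6.NN_split (i := i) (c := i) (x := T i k) (b := T i j) T (le_of_lt h2)
    have hcard : ((Finset.Ico 1 i).filter fun r => T i k < T r i ∧ T r i ≤ T i j).card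
        ≤ (Finset.Ioo (T i k) (T i j)).card := by
      apply Finset.card_le_card_of_injOn (fun r => T r i)
      · intro r hr
        simp only [Finset.mem_coe, Finset.mem_filter] at hr
        have hrr := Finset.mem_Ico.mp hr.1
        rw [Finset.mem_coe, Finset.mem_Ioo]; beta_reduce
        have hned : T r i ≠ T i j := by
          intro heqd
          obtain ⟨hb1', hb2'⟩ := (hbal r hrr.1 hrr.2).1
          rw [heqd] at hb1' hb2'
          simp only [min_self, max_self] at hb1' hb2'
          exact hCIT j r i hrr.1 hi (by omega) (by omega) (le_antisymm hb2' hb1')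
        exact ⟨hr.2.1, by omega⟩
      · intro r1 h1' r2 h2' heq
        simp only [Finset.coe_filter, Set.mem_setOf_eq] at h1' h2'
        by_contra hnn
        exact hCIT i r1 r2 (Finset.mem_Ico.mp h1'.1).1 (Finset.mem_Ico.mp h2'.1).1 hnn
          (by omega) heq
    rw [Nat.card_Ioo] at hcard
    omega
  unfold S6.Ps at hK hJ
  omega
end
end

section
/- Let T, T' be inversions tableaux for w ∈ S_n that agree in all columns other than column n, and suppose T' = ↑_M T for some multiset M of boxes in column n. Then T(i,j) ≤ T'(i,j) for all (i,j) ∈ Δ_{n-1}. -/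
open Classical

noncomputable section

/-- A single increment at `(i,c)` weakly increases the row-0 entry of column `c`,
strictly if `i = 0`. -/
lemma step_row0_s8 {T T' : ℕ → ℕ → ℕ} {i c : ℕ} (h : IncrementAt T T' i c) :
    T 0 c ≤ T' 0 c ∧ (i = 0 → T 0 c < T' 0 c) := by
  obtain ⟨b, hab, -, -, hcase⟩ := h
  rcases hcase with ⟨-, rfl⟩ | ⟨i'', hii, hb, rfl⟩
  · by_cases hi : 0 = i
    · subst hi; constructor <;> simp <;> omega
    · constructor
      · simp [hi]
      · omega
  · by_cases hi : 0 = i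
    · subst hi; constructor <;> simp <;> omega
    · have hi'' : ¬ (0 = i'') := by omega
      constructor
      · simp [hi, hi'']
      · omega

lemma incBy_row0_s8 {M : Multiset (ℕ × ℕ)} {T T' : ℕ → ℕ → ℕ} {c : ℕ} (h : IncBy M T T')
    (hc : ∀ p ∈ M, p.2 = c) : T 0 c ≤ T' 0 c ∧ ((0, c) ∈ M → T 0 c < T' 0 c) := by
  induction h with
  | nil T => simp
  | @cons M₀ T₀ T₁ T₂ i j hstep htail ih =>
    have hj : j = c := hc (i, j) (Multiset.mem_cons_self _ _)
    subst hj
    have h1 := step_row0_s8 hstep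
    have h2 := ih (fun p hp => hc p (Multiset.mem_cons_of_mem hp))
    refine ⟨le_trans h1.1 h2.1, ?_⟩
    intro hmem
    rcases Multiset.mem_cons.mp hmem with heq | hmem'
    · have : i = 0 := by
        have := congrArg Prod.fst heq
        simpa using this.symm
      exact lt_of_lt_of_le (h1.2 this) h2.1
    · exact lt_of_le_of_lt h1.1 (h2.2 hmem')

/-- Number of rows in `[1, N]` whose column-`c` entry is at least `t`. -/
def colCnt (t N c : ℕ) (X : ℕ → ℕ → ℕ) : ℕ :=
  ((Finset.Icc 1 N).filter fun s => t ≤ X s c).card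

lemma step_colCnt {T T' : ℕ → ℕ → ℕ} {i c : ℕ} (hi : 1 ≤ i) (h : IncrementAt T T' i c)
    (t N : ℕ) : colCnt t N c T ≤ colCnt t N c T' := by
  obtain ⟨b, hab, -, -, hcase⟩ := h
  rcases hcase with ⟨-, rfl⟩ | ⟨i'', hii, hb, rfl⟩
  · -- pure increment: pointwise increase
    apply Finset.card_le_card
    intro s hs
    simp only [Finset.mem_filter] at hs ⊢
    refine ⟨hs.1, ?_⟩
    have hs2 := hs.2
    by_cases hsi : s = i
    · rw [if_pos ⟨hsi, trivial⟩]
      rw [hsi] at hs2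
      omega
    · rw [if_neg (by simp [hsi])]
      exact hs2
  · -- trade increment
    set F := fun a c' => if a = i ∧ c' = c then b
      else if a = i'' ∧ c' = c then T i c else T a c' with hF
    have hFi : F i c = b := by simp [hF]
    have hFi'' : F i'' c = T i c := by
      have : ¬ (i'' = i) := by omega
      simp [hF, this]
    have hFo : ∀ s, s ≠ i → s ≠ i'' → F s c = T s c := by
      intro s h1 h2
      simp [hF, h1, h2]
    by_cases hta : t ≤ T i c
    · -- sets are equal
      apply le_of_eq
      unfold colCnt
      congr 1
      apply Finset.filter_congr
      intro s _
      by_cases hsi : s = i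
      · rw [hsi, hFi]
        constructor <;> intro <;> omega
      · by_cases hsi'' : s = i''
        · rw [hsi'', hFi'', hb ]
          constructor <;> intro <;> omega
        · rw [hFo s hsi hsi'']
    · -- inject via s ↦ if s = i'' then i else s
      apply Finset.card_le_card_of_injOn (fun s => if s = i'' then i else s)
      · intro s hs
        simp only [Finset.mem_coe, Finset.mem_filter, Finset.mem_Icc] at hs
        have hsne : s ≠ i := fun h => hta (h ▸ hs.2)
        by_cases hsi'' : s = i''
        · simp only [if_pos hsi'']
          simp only [Finset.mem_coe, Finset.mem_filter, Finset.mem_Icc]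
          refine ⟨⟨hi, by omega⟩, ?_⟩
          rw [hFi]
          have hsb : t ≤ b := by rw [hsi'', hb] at hs; exact hs.2
          exact hsb
        · simp only [if_neg hsi'']
          simp only [Finset.mem_coe, Finset.mem_filter, Finset.mem_Icc]
          refine ⟨hs.1, ?_⟩
          rw [hFo s hsne hsi'']
          exact hs.2
      · intro s1 hs1 s2 hs2 heq
        simp only [Finset.coe_filter, Set.mem_setOf_eq, Finset.mem_Icc] at hs1 hs2
        have h1 : s1 ≠ i := fun h => hta (h ▸ hs1.2)
        have h2 : s2 ≠ i := fun h => hta (h ▸ hs2.2)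
        by_cases e1 : s1 = i'' <;> by_cases e2 : s2 = i'' <;>
          simp [e1, e2] at heq ⊢ <;> omega

lemma incBy_colCnt {M : Multiset (ℕ × ℕ)} {T T' : ℕ → ℕ → ℕ} {c : ℕ} (h : IncBy M T T')
    (hc : ∀ p ∈ M, p.2 = c) (h0 : (0, c) ∉ M) (t N : ℕ) :
    colCnt t N c T ≤ colCnt t N c T' := by
  induction h with
  | nil T => exact le_rfl
  | @cons M₀ T₀ T₁ T₂ i j hstep htail ih =>
    have hj : j = c := hc (i, j) (Multiset.mem_cons_self _ _)
    subst hj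
    have hi : 1 ≤ i := by
      rcases Nat.eq_zero_or_pos i with rfl | hpos
      · exact absurd (Multiset.mem_cons_self _ _) h0
      · exact hpos
    refine le_trans (step_colCnt hi hstep t N) ?_
    exact ih (fun p hp => hc p (Multiset.mem_cons_of_mem hp))
      (fun hm => h0 (Multiset.mem_cons_of_mem hm))

/-- If two inversions tableaux for `w` agree outside column `n` and one is
obtained from the other by incrementing boxes of column `n`, the entries only grow. -/
theorem le_of_incBy_lastCol {n : ℕ} (w : Equiv.Perm (Fin n)) (T T' : ℕ → ℕ → ℕ)
    (hT : InvTab w T) (hT' : InvTab w T')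
    (hagree : ∀ i j, j ≠ n → T i j = T' i j)
    (M : Multiset (ℕ × ℕ)) (hMcol : ∀ p ∈ M, p.2 = n) (hM : IncBy M T T') :
    ∀ i j, 1 ≤ i → i < j → j ≤ n → T i j ≤ T' i j := by
  intro i j hi hij hjn
  by_cases hj : j = n
  swap
  · rw [hagree i j hj]
  rw [hj] at hij ⊢
  clear hjn hj
  -- work in column n
  by_contra hcon
  push_neg at hcon
  set t := T i n with ht
  have ht1 : 1 ≤ t := by omega
  have hinv : IsInv w i n := (hT.1.1 i n).mp (by omega)
  obtain ⟨hi1, hin, -, -⟩ := hinv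
  have hn2 : 2 ≤ n := by omega
  -- row 0 of column n is zero in both tableaux
  have hT0 : T 0 n = 0 := by
    by_contra h0
    have := ((hT.1.1 0 n).mp h0).1
    omega
  have hT'0 : T' 0 n = 0 := by
    by_contra h0
    have := ((hT'.1.1 0 n).mp h0).1
    omega
  have h0M : (0, n) ∉ M := by
    intro hm
    have := (incBy_row0_s8 hM hMcol).2 hm
    omega
  have hcnt := incBy_colCnt hM hMcol h0M t (n - 1)
  -- key claim from balancedness
  have hclaim : ∀ s, 1 ≤ s → s ≤ n - 1 → s ≠ i → t ≤ T' s n → t ≤ T s n := by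
    intro s hs1 hs2 hsne hsge
    have hsn : s < n := by omega
    rcases lt_or_gt_of_ne hsne with hlt | hgt
    · -- s < i : use Λ(s, i, n)
      have hb' := hT'.2.1 s i n hs1 hlt hin le_rfl
      have hb := hT.2.1 s i n hs1 hlt hin le_rfl
      have hag : T s i = T' s i := hagree s i (by omega)
      have h1 : t ≤ max (T' s i) (T' i n) := le_trans hsge hb'.2
      have h2 : t ≤ T' s i := by
        rcases le_max_iff.mp h1 with h | h
        · exact h
        · omega
      have h3 : t ≤ min (T s i) (T i n) := le_min (by omega) le_rfl
      exact le_trans h3 hb.1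
    · -- s > i : use Λ(i, s, n)
      have hb' := hT'.2.1 i s n hi1 hgt hsn le_rfl
      have hb := hT.2.1 i s n hi1 hgt hsn le_rfl
      have hag : T i s = T' i s := hagree i s (by omega)
      have h1 : min (T' i s) (T' s n) ≤ T' i n := hb'.1
      have h2 : T' i s < t := by
        rcases min_le_iff.mp h1 with h | h
        · omega
        · omega
      have h3 : t ≤ max (T i s) (T s n) := le_trans le_rfl hb.2
      rcases le_max_iff.mp h3 with h | h
      · omega
      · exact h
  -- counting contradiction
  have himem : i ∈ (Finset.Icc 1 (n - 1)).filter fun s => t ≤ T s n := by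
    simp only [Finset.mem_filter, Finset.mem_Icc]
    exact ⟨⟨hi1, by omega⟩, le_rfl⟩
  have hsub : ((Finset.Icc 1 (n - 1)).filter fun s => t ≤ T' s n) ⊆
      (((Finset.Icc 1 (n - 1)).filter fun s => t ≤ T s n).erase i) := by
    intro s hs
    simp only [Finset.mem_filter, Finset.mem_Icc] at hs
    have hsne : s ≠ i := by
      rintro rfl; omega
    refine Finset.mem_erase.mpr ⟨hsne, ?_⟩
    simp only [Finset.mem_filter, Finset.mem_Icc]
    exact ⟨hs.1, hclaim s hs.1.1 hs.1.2 hsne hs.2⟩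
  have hcard : colCnt t (n - 1) n T' ≤ colCnt t (n - 1) n T - 1 := by
    have := Finset.card_le_card hsub
    rw [Finset.card_erase_of_mem himem] at this
    exact this
  have hpos : 1 ≤ colCnt t (n - 1) n T := Finset.card_pos.mpr ⟨i, himem⟩
  unfold colCnt at hcnt hcard hpos
  omega
end
end
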